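/- arXiv:2211.01905 — 5 statements merged into one kernel-verified Lean document; each statement's English description precedes it below -/
import Mathlib

section
/- For every hypergraph H that has at least one hyperedge and in which every vertex is contained in some hyperedge, the independence number, fractional independence number, and adaptive width satisfy α(H) ≥ 1/2 + α*(H)/(4·aw(H)). -/
noncomputable section

/-! ### Hypergraphs -/

/-- A hypergraph: a vertex set together with a set of nonempty hyperedges. -/
structure Hypergraph' (V : Type) where
  verts : Set V
  edges : Set (Set V)
  edge_nonempty : ∀ e ∈ edges, e.Nonempty
  edge_subset : ∀ e ∈ edges, e ⊆ verts

namespace Hypergraph'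

variable {V : Type}

/-- An independent set: no two of its vertices lie in a common hyperedge. -/
def IsIndepSet (H : Hypergraph' V) (I : Set V) : Prop :=
  I ⊆ H.verts ∧ ∀ u ∈ I, ∀ v ∈ I, u ≠ v → ∀ e ∈ H.edges, ¬(u ∈ e ∧ v ∈ e)

/-- The independence number `α`. -/
def indepNum (H : Hypergraph' V) : ℕ :=
  sSup {n | ∃ I : Set V, H.IsIndepSet I ∧ I.ncard = n}

/-- A fractional independent set: `μ : V(H) → [0,1]` with `∑_{v ∈ e} μ v ≤ 1` for each edge. -/
def IsFracIndep (H : Hypergraph' V) (μ : V → ℝ) : Prop :=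
  (∀ v, 0 ≤ μ v ∧ μ v ≤ 1) ∧ (∀ v, v ∉ H.verts → μ v = 0) ∧
    ∀ e ∈ H.edges, (∑ᶠ v ∈ e, μ v) ≤ 1

/-- The weight of a (fractional independent) vertex-weighting. -/
def weight (H : Hypergraph' V) (μ : V → ℝ) : ℝ := ∑ᶠ v ∈ H.verts, μ v

/-- The fractional independence number `α*`. -/
def fracIndepNum (H : Hypergraph' V) : ℝ :=
  sSup {w | ∃ μ : V → ℝ, H.IsFracIndep μ ∧ H.weight μ = w}

/-- A fractional edge cover of a set `X` of vertices. -/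
def IsFracEdgeCover (H : Hypergraph' V) (X : Set V) (γ : Set V → ℝ) : Prop :=
  (∀ e, 0 ≤ γ e) ∧ (∀ e, e ∉ H.edges → γ e = 0) ∧
    ∀ v ∈ X, 1 ≤ ∑ᶠ e ∈ {e ∈ H.edges | v ∈ e}, γ e

/-- The weight of an edge-weighting. -/
def coverWeight (H : Hypergraph' V) (γ : Set V → ℝ) : ℝ := ∑ᶠ e ∈ H.edges, γ e

/-- `ρ*_H(X)`: the fractional edge cover number of a set `X` of vertices. -/
def fracCoverOf (H : Hypergraph' V) (X : Set V) : ℝ :=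
  sInf {w | ∃ γ : Set V → ℝ, H.IsFracEdgeCover X γ ∧ H.coverWeight γ = w}

/-- The fractional edge cover number `ρ*(H)`. -/
def fracEdgeCoverNum (H : Hypergraph' V) : ℝ := H.fracCoverOf H.verts

/-- A tree decomposition of a hypergraph. -/
structure TreeDecomp (H : Hypergraph' V) where
  n : ℕ
  tree : SimpleGraph (Fin n)
  isTree : tree.IsTree
  bag : Fin n → Set V
  bag_subset : ∀ t, bag t ⊆ H.verts
  verts_covered : ∀ v ∈ H.verts, ∃ t, v ∈ bag t
  edges_covered : ∀ e ∈ H.edges, ∃ t, e ⊆ bag t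
  bags_connected : ∀ (v : V) (t₁ t₂ : Fin n) (h₁ : v ∈ bag t₁) (h₂ : v ∈ bag t₂),
    (tree.induce {t | v ∈ bag t}).Reachable ⟨t₁, h₁⟩ ⟨t₂, h₂⟩

/-- The `μ`-width of a tree decomposition: the maximum `μ`-weight of a bag. -/
def TreeDecomp.muWidth {H : Hypergraph' V} (td : H.TreeDecomp) (μ : V → ℝ) : ℝ :=
  ⨆ t, ∑ᶠ v ∈ td.bag t, μ v

/-- The `μ`-width of a hypergraph: minimum `μ`-width over tree decompositions. -/
def muWidth (H : Hypergraph' V) (μ : V → ℝ) : ℝ :=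
  sInf {w | ∃ td : H.TreeDecomp, td.muWidth μ = w}

/-- The adaptive width `aw(H)`: supremum of the `μ`-widths over fractional
independent sets `μ`. -/
def adaptiveWidth (H : Hypergraph' V) : ℝ :=
  sSup {w | ∃ μ : V → ℝ, H.IsFracIndep μ ∧ H.muWidth μ = w}

/-- The fractional hypertreewidth `fhtw(H)`. -/
def fhtw (H : Hypergraph' V) : ℝ :=
  sInf {w | ∃ td : H.TreeDecomp, (⨆ t, H.fracCoverOf (td.bag t)) = w}

/-- Add a new vertex `v'` to the hypergraph and replace the hyperedge `e` by `e ∪ {v'}`. -/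
def extendEdge (H : Hypergraph' V) (e : Set V) (he : e ∈ H.edges) (v' : V) :
    Hypergraph' V where
  verts := insert v' H.verts
  edges := (H.edges \ {e}) ∪ {insert v' e}
  edge_nonempty := by
    rintro f (⟨hf, -⟩ | hf)
    · exact H.edge_nonempty f hf
    · rw [Set.mem_singleton_iff] at hf; subst hf; exact ⟨v', Set.mem_insert _ _⟩
  edge_subset := by
    rintro f (⟨hf, -⟩ | hf)
    · exact (H.edge_subset f hf).trans (Set.subset_insert _ _)
    · rw [Set.mem_singleton_iff] at hf; subst hf
      exact Set.insert_subset_insert (H.edge_subset e he)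

end Hypergraph'

/-! ### Digraphs -/

namespace Digraph

variable {V A B : Type}

/-- `u` reaches `v` by a directed path (possibly of length 0). -/
def Reaches (G : Digraph V) (u v : V) : Prop := Relation.ReflTransGen G.Adj u v

/-- `R(u)`: the set of vertices reachable from `u` (including `u`). -/
def reachSet (G : Digraph V) (u : V) : Set V := {v | G.Reaches u v}

/-- The setoid whose classes are the strongly connected components. -/
def sccSetoid (G : Digraph V) : Setoid V where
  r u v := G.Reaches u v ∧ G.Reaches v u
  iseqv := ⟨fun _ => ⟨.refl, .refl⟩, fun h => ⟨h.2, h.1⟩,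
    fun h₁ h₂ => ⟨h₁.1.trans h₂.1, h₂.2.trans h₁.2⟩⟩

/-- The condensation `H/∼`: the loop-free DAG obtained by contracting each strongly
connected component to a single vertex. -/
def cond (G : Digraph V) : Digraph (Quotient G.sccSetoid) where
  Adj X Y := X ≠ Y ∧ ∃ a b, Quotient.mk G.sccSetoid a = X ∧
    Quotient.mk G.sccSetoid b = Y ∧ G.Adj a b

/-- `v` lies in a source component: its strongly connected component is not
reachable from any other component. -/
def InSourceComp (G : Digraph V) (v : V) : Prop := ∀ u, G.Reaches u v → G.Reaches v u

/-- `v` is a source: a vertex of in-degree `0`. -/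
def IsSrc (G : Digraph V) (v : V) : Prop := ∀ u, ¬ G.Adj u v

/-- The reachability hypergraph `R(H)` of a digraph: vertices `V(H)`, one hyperedge
`R(s)` for each (representative `s` of a) source component. -/
def reachHyp (G : Digraph V) : Hypergraph' V where
  verts := Set.univ
  edges := {e | ∃ s, G.InSourceComp s ∧ e = G.reachSet s}
  edge_nonempty := by rintro e ⟨s, -, rfl⟩; exact ⟨s, Relation.ReflTransGen.refl⟩
  edge_subset := fun e _ => Set.subset_univ e

/-- The contour `Γ(H)` of a digraph: the reachability hypergraph with all vertices of
source components deleted (empty hyperedges discarded). -/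
def contour (G : Digraph V) : Hypergraph' V where
  verts := {v | ¬ G.InSourceComp v}
  edges := {e | (∃ s, G.InSourceComp s ∧
    e = G.reachSet s \ {v | G.InSourceComp v}) ∧ e.Nonempty}
  edge_nonempty := fun _ he => he.2
  edge_subset := by rintro e ⟨⟨s, -, rfl⟩, -⟩ v hv; exact hv.2

/-- The reachability hypergraph of a DAG: one hyperedge `R(s)` for each in-degree `0`
vertex `s`. -/
def dagReachHyp (G : Digraph V) : Hypergraph' V where
  verts := Set.univ
  edges := {e | ∃ s, G.IsSrc s ∧ e = G.reachSet s}
  edge_nonempty := by rintro e ⟨s, -, rfl⟩; exact ⟨s, Relation.ReflTransGen.refl⟩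
  edge_subset := fun e _ => Set.subset_univ e

/-- The contour of a DAG: the reachability hypergraph with all sources deleted. -/
def dagContour (G : Digraph V) : Hypergraph' V where
  verts := {v | ¬ G.IsSrc v}
  edges := {e | (∃ s, G.IsSrc s ∧ e = G.reachSet s \ {v | G.IsSrc v}) ∧ e.Nonempty}
  edge_nonempty := fun _ he => he.2
  edge_subset := by rintro e ⟨⟨s, -, rfl⟩, -⟩ v hv; exact hv.2

/-- A homomorphism of digraphs: a map preserving arcs. -/
def IsHom (H : Digraph A) (G : Digraph B) (φ : A → B) : Prop :=
  ∀ ⦃u v⦄, H.Adj u v → G.Adj (φ u) (φ v)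

/-- The tensor product of digraphs. -/
def tensor (G : Digraph A) (F : Digraph B) : Digraph (A × B) where
  Adj x y := G.Adj x.1 y.1 ∧ F.Adj x.2 y.2

/-- The induced subdigraph on a set of vertices. -/
def induce (G : Digraph A) (S : Set A) : Digraph S where
  Adj a b := G.Adj a.1 b.1

/-- The quotient digraph `H/σ` of a digraph by a partition (setoid) of its vertices. -/
def quot (H : Digraph A) (σ : Setoid A) : Digraph (Quotient σ) where
  Adj X Y := ∃ a b, Quotient.mk σ a = X ∧ Quotient.mk σ b = Y ∧ H.Adj a b

/-- A loop-free digraph. -/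
def LoopFree (H : Digraph A) : Prop := ∀ v, ¬ H.Adj v v

/-- A digraph without directed cycles (in particular, without loops). -/
def IsAcyclic (H : Digraph A) : Prop := ∀ u v, H.Adj u v → ¬ H.Reaches v u

/-- A canonical DAG: a DAG in which every vertex has in-degree 0 or out-degree 0. -/
def IsCanonicalDAG (H : Digraph A) : Prop :=
  H.IsAcyclic ∧ ∀ v, (∀ u, ¬ H.Adj u v) ∨ (∀ u, ¬ H.Adj v u)

/-- `t` lies in a sink component: from its strongly connected component no other
component is reachable. -/
def IsSinkVert (H : Digraph A) (t : A) : Prop := ∀ v, H.Reaches t v → H.Reaches v t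

/-- Sink deletion: delete all vertices of the strongly connected component of `t`. -/
def sinkDelete (H : Digraph A) (t : A) :
    Digraph {v : A // ¬ (H.Reaches v t ∧ H.Reaches t v)} where
  Adj a b := H.Adj a.1 b.1

/-- Loop deletion: delete the loop at `u`. -/
def deleteLoop (H : Digraph A) (u : A) : Digraph A where
  Adj a b := H.Adj a b ∧ ¬(a = u ∧ b = u)

/-- The number of sources (in-degree `0` vertices) of the condensation `H/∼`. -/
def numSources (H : Digraph A) : ℕ :=
  {X : Quotient H.sccSetoid | ∀ Y, ¬ H.cond.Adj Y X}.ncard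

end Digraph

/-- The number of homomorphisms from `H` to `G`. -/
def homCount {A B : Type} (H : Digraph A) (G : Digraph B) : ℕ :=
  Nat.card {φ : A → B // H.IsHom G φ}

/-- Two digraphs are isomorphic: a bijection of the vertex sets preserving arcs in
both directions. -/
def DigraphIso {A B : Type} (H : Digraph A) (G : Digraph B) : Prop :=
  ∃ e : A ≃ B, ∀ u v, H.Adj u v ↔ G.Adj (e u) (e v)

/-- The number of subgraphs of `G` (pairs of a vertex subset and an arc subset of `G`
among those vertices) that are isomorphic to `H`. -/
def subCount {A B : Type} (H : Digraph A) (G : Digraph B) : ℕ :=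
  Nat.card {p : Set B × (B → B → Prop) //
    (∀ a b, p.2 a b → a ∈ p.1 ∧ b ∈ p.1 ∧ G.Adj a b) ∧
    DigraphIso H (Digraph.mk fun (a b : p.1) => p.2 a b)}

/-- The number of vertex subsets of `G` inducing a subgraph isomorphic to `H`. -/
def indSubCount {A B : Type} (H : Digraph A) (G : Digraph B) : ℕ :=
  Nat.card {S : Set B // DigraphIso H (G.induce S)}

/-- `H'` is an arc supergraph of the loop-free digraph `H`: a loop-free digraph on the
same vertex set whose arc set contains that of `H`. -/
def ArcSupergraph {A : Type} (H H' : Digraph A) : Prop :=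
  H'.LoopFree ∧ ∀ u v, H.Adj u v → H'.Adj u v

/-- The setoid identifying exactly `u` and `v`. -/
def pairSetoid {A : Type} (u v : A) : Setoid A where
  r a b := a = b ∨ (a ∈ ({u, v} : Set A) ∧ b ∈ ({u, v} : Set A))
  iseqv := by
    refine ⟨fun _ => Or.inl rfl, ?_, ?_⟩
    · rintro a b (rfl | ⟨h₁, h₂⟩)
      · exact Or.inl rfl
      · exact Or.inr ⟨h₂, h₁⟩
    · rintro a b c (rfl | ⟨h₁, h₂⟩) h
      · exact h
      · rcases h with rfl | ⟨h₃, h₄⟩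
        · exact Or.inr ⟨h₁, h₂⟩
        · exact Or.inr ⟨h₁, h₄⟩

/-- Arc contraction: identify the endpoints of the arc `(u,v)`; arcs between `u` and
`v` do not yield a loop. -/
def Digraph.contractArc {A : Type} (H : Digraph A) (u v : A) :
    Digraph (Quotient (pairSetoid u v)) where
  Adj X Y := ∃ a b, Quotient.mk (pairSetoid u v) a = X ∧ Quotient.mk (pairSetoid u v) b = Y ∧
    H.Adj a b ∧ ¬(a ≠ b ∧ a ∈ ({u, v} : Set A) ∧ b ∈ ({u, v} : Set A))

/-- `MRMinor M H`: `M` is a monotone reversible minor of `H`, i.e. `M` can be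
obtained (up to isomorphism) from `H` by a finite sequence of sink deletions,
arc contractions, and loop deletions. -/
inductive MRMinor : ∀ {A : Type}, Digraph A → ∀ {B : Type}, Digraph B → Prop
  | of_iso {A B : Type} {M : Digraph A} {H : Digraph B} :
      DigraphIso M H → MRMinor M H
  | sink_del {A B : Type} {M : Digraph A} {H : Digraph B} (t : B) :
      H.IsSinkVert t → MRMinor M (H.sinkDelete t) → MRMinor M H
  | contract {A B : Type} {M : Digraph A} {H : Digraph B} (u v : B) :
      H.Adj u v → MRMinor M (H.contractArc u v) → MRMinor M H
  | loop_del {A B : Type} {M : Digraph A} {H : Digraph B} (u : B) :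
      H.Adj u u → MRMinor M (H.deleteLoop u) → MRMinor M H

/-- `SinkDelSeq H F`: `F` is obtained from `H` by a finite sequence of sink deletions. -/
inductive SinkDelSeq : ∀ {A : Type}, Digraph A → ∀ {B : Type}, Digraph B → Prop
  | refl {A : Type} (H : Digraph A) : SinkDelSeq H H
  | step {A : Type} {H : Digraph A} (t : A) {B : Type} {F : Digraph B} :
      H.IsSinkVert t → SinkDelSeq (H.sinkDelete t) F → SinkDelSeq H F

/-- The directed split of an undirected graph `F`: vertices `V(F) ⊕ E(F)`, with arcs
from each edge `e = {u,v}` to `u` and to `v`. -/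
def dsplit {α : Type} (F : SimpleGraph α) : Digraph (α ⊕ F.edgeSet) where
  Adj x y :=
    match x, y with
    | Sum.inr e, Sum.inl u => u ∈ e.1
    | _, _ => False

/-- `D` has an induced matching gadget of size `k`: arcs `(s i, w i)` with the `w i`
pairwise distinct such that no source of `D` reaches two distinct `w i`. -/
def HasIMG {A : Type} (D : Digraph A) (k : ℕ) : Prop :=
  ∃ s w : Fin k → A, (∀ i, D.Adj (s i) (w i)) ∧ Function.Injective w ∧
    ∀ x, D.IsSrc x → ∀ i j, D.Reaches x (w i) → D.Reaches x (w j) → i = j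

/-- The maximum size of an induced matching gadget of `D`. -/
def imgNum {A : Type} (D : Digraph A) : ℕ := sSup {k | HasIMG D k}

/-- A fractional cover of a DAG `D`: nonnegative weights on the sources such that each
non-source is covered with total weight at least 1; the total weight is at least 1. -/
def Digraph.IsFracCover {A : Type} (D : Digraph A) (ψ : A → ℝ) : Prop :=
  (∀ s, 0 ≤ ψ s) ∧ (∀ s, ¬ D.IsSrc s → ψ s = 0) ∧
    (∀ v, ¬ D.IsSrc v → 1 ≤ ∑ᶠ s ∈ {s | D.IsSrc s ∧ v ∈ D.reachSet s}, ψ s) ∧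
    1 ≤ ∑ᶠ s ∈ {s | D.IsSrc s}, ψ s

/-- The fractional cover number of a DAG: the minimum weight of a fractional cover. -/
def Digraph.dagFracCoverNum {A : Type} (D : Digraph A) : ℝ :=
  sInf {w | ∃ ψ : A → ℝ, D.IsFracCover ψ ∧ (∑ᶠ s ∈ {s | D.IsSrc s}, ψ s) = w}

/-- The fractional cover number `ρ*(H)` of a digraph: the fractional cover number of
its condensation. -/
def Digraph.fracCoverNum {A : Type} (G : Digraph A) : ℝ := G.cond.dagFracCoverNum


namespace TreeAux
open SimpleGraph

variable {β : Type} [DecidableEq β] {T : SimpleGraph β}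

noncomputable def upath (hT : T.IsTree) (a b : β) : T.Walk a b :=
  (hT.isConnected.preconnected a b).some.bypass

lemma upath_isPath (hT : T.IsTree) (a b : β) : (upath hT a b).IsPath :=
  Walk.bypass_isPath _

lemma eq_upath (hT : T.IsTree) {a b : β} {p : T.Walk a b} (hp : p.IsPath) :
    p = upath hT a b := by
  have h := isAcyclic_iff_path_unique.mp hT.IsAcyclic ⟨p, hp⟩ ⟨upath hT a b, upath_isPath hT a b⟩
  exact congrArg Subtype.val h

lemma upath_length (hT : T.IsTree) (a b : β) : (upath hT a b).length = T.dist a b := by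
  refine le_antisymm ?_ (dist_le _)
  obtain ⟨p, hp⟩ := hT.isConnected.exists_walk_length_eq_dist a b
  have h1 : p.bypass = upath hT a b := eq_upath hT (Walk.bypass_isPath p)
  rw [← h1]
  exact le_trans (Walk.length_bypass_le p) (le_of_eq hp)

lemma dist_add_of_mem_upath (hT : T.IsTree) {a b z : β} (hz : z ∈ (upath hT a b).support) :
    T.dist a z + T.dist z b = T.dist a b := by
  have hsp := upath_isPath hT a b
  have h1 : (upath hT a b).takeUntil z hz = upath hT a z := eq_upath hT (hsp.takeUntil hz)
  have h2 : (upath hT a b).dropUntil z hz = upath hT z b := eq_upath hT (hsp.dropUntil hz)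
  have h3 := Walk.take_spec (upath hT a b) hz
  have h4 := congrArg Walk.length h3
  rw [Walk.length_append, h1, h2, upath_length, upath_length, upath_length] at h4
  exact h4

/-- Connectivity of a set in the induced-subgraph sense. -/
def Conn (T : SimpleGraph β) (S : Set β) : Prop :=
  ∀ x (hx : x ∈ S) y (hy : y ∈ S), (T.induce S).Reachable ⟨x, hx⟩ ⟨y, hy⟩

lemma upath_support_subset (hT : T.IsTree) {S : Set β} (hS : Conn T S) {a b : β}
    (ha : a ∈ S) (hb : b ∈ S) : ∀ z ∈ (upath hT a b).support, z ∈ S := by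
  obtain ⟨w⟩ := hS a ha b hb
  let f : T.induce S →g T := ⟨Subtype.val, fun h => h⟩
  let w' : T.Walk a b := w.map f
  have hsupp : ∀ z ∈ w'.support, z ∈ S := by
    intro z hz
    rw [Walk.support_map] at hz
    obtain ⟨⟨x, hx⟩, _, rfl⟩ := List.mem_map.mp hz
    exact hx
  have hb' : w'.bypass = upath hT a b := eq_upath hT (Walk.bypass_isPath w')
  intro z hz
  rw [← hb'] at hz
  exact hsupp z (Walk.support_bypass_subset _ hz)

lemma exists_gate (hT : T.IsTree) {S : Set β} (hS : Conn T S) (hne : S.Nonempty)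
    (hfin : S.Finite) (r : β) :
    ∃ m ∈ S, (∀ z ∈ S, T.dist r m ≤ T.dist r z) ∧
      ∀ z ∈ S, m ∈ (upath hT r z).support := by
  obtain ⟨m, hmS, hmin⟩ := Set.exists_min_image S (fun z => T.dist r z) hfin hne
  refine ⟨m, hmS, hmin, ?_⟩
  intro z hz
  have hq : ((upath hT r m).append (upath hT m z)).IsPath := by
    rw [Walk.isPath_def, Walk.support_append]
    refine List.Nodup.append ((upath_isPath hT r m).support_nodup) ?_ ?_
    · have h := (upath_isPath hT m z).support_nodup
      rw [(upath hT m z).support_eq_cons] at h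
      exact h.of_cons
    · intro c hc1 hc2
      have hcsupp : c ∈ (upath hT m z).support := List.tail_subset _ hc2
      have hcS : c ∈ S := upath_support_subset hT hS hmS hz c hcsupp
      have hadd := dist_add_of_mem_upath hT hc1
      have hmin' := hmin c hcS
      have hzero : T.dist c m = 0 := by omega
      have hcm : c = m := (hT.isConnected.dist_eq_zero_iff).mp hzero
      subst hcm
      have h := (upath_isPath hT c z).support_nodup
      rw [(upath hT c z).support_eq_cons] at h
      exact (List.nodup_cons.mp h).1 hc2
  have heq : (upath hT r m).append (upath hT m z) = upath hT r z := eq_upath hT hq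
  rw [← heq]
  exact (Walk.mem_support_append_iff _ _).mpr (Or.inl (Walk.end_mem_support _))

end TreeAux

namespace TreeAux2
open SimpleGraph TreeAux

variable {β : Type} [DecidableEq β] {T : SimpleGraph β}

lemma key (hT : T.IsTree) (r : β) {Su Sv : Set β} (hSu : Conn T Su)
    (mu mv : β) (hmu : mu ∈ Su)
    (hgu : ∀ z ∈ Su, mu ∈ (upath hT r z).support)
    (hgv : ∀ z ∈ Sv, mv ∈ (upath hT r z).support)
    (hle : T.dist r mu ≤ T.dist r mv) {x : β} (hxu : x ∈ Su) (hxv : x ∈ Sv) :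
    mv ∈ Su := by
  have h1 : mv ∈ (upath hT r x).support := hgv x hxv
  have h2 : mu ∈ (upath hT r x).support := hgu x hxu
  have hspec := Walk.take_spec (upath hT r x) h2
  rw [← hspec] at h1
  rcases (Walk.mem_support_append_iff _ _).mp h1 with hc | hc
  · have ht : (upath hT r x).takeUntil mu h2 = upath hT r mu :=
      eq_upath hT ((upath_isPath hT r x).takeUntil h2)
    rw [ht] at hc
    have hadd := dist_add_of_mem_upath hT hc
    have hzero : T.dist mv mu = 0 := by omega
    have : mv = mu := (hT.isConnected.dist_eq_zero_iff).mp hzero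
    rw [this]; exact hmu
  · have ht : (upath hT r x).dropUntil mu h2 = upath hT mu x :=
      eq_upath hT ((upath_isPath hT r x).dropUntil h2)
    rw [ht] at hc
    exact upath_support_subset hT hSu hmu hxu mv hc

lemma greedy (hT : T.IsTree) [Fintype β] {ι : Type} (S : ι → Set β) (A : Finset ι) :
    (∀ i ∈ A, Conn T (S i)) → (∀ i ∈ A, (S i).Nonempty) →
    ∃ (P : Finset ι) (c : ι → β), P ⊆ A ∧ (∀ p ∈ P, c p ∈ S p) ∧
      (∀ i ∈ A, ∃ p ∈ P, c p ∈ S i) ∧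
      (∀ p ∈ P, ∀ q ∈ P, p ≠ q → S p ∩ S q = ∅) := by
  classical
  have hβ : Nonempty β := hT.isConnected.nonempty
  obtain ⟨r⟩ := hβ
  induction A using Finset.strongInduction with
  | _ A ih =>
    intro hconn hne
    rcases A.eq_empty_or_nonempty with rfl | hA
    · exact ⟨∅, fun _ => r, Finset.Subset.refl _, by simp, by simp, by simp⟩
    · have hgate : ∀ i ∈ A, ∃ m, m ∈ S i ∧ (∀ z ∈ S i, T.dist r m ≤ T.dist r z) ∧
          ∀ z ∈ S i, m ∈ (upath hT r z).support := by
        intro i hi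
        obtain ⟨m, h1, h2, h3⟩ := exists_gate hT (hconn i hi) (hne i hi) (Set.toFinite _) r
        exact ⟨m, h1, h2, h3⟩
      haveI : Inhabited β := ⟨r⟩
      choose! m hmS hmmin hmgate using hgate
      obtain ⟨v, hvA, hvmax⟩ := A.exists_max_image (fun i => T.dist r (m i)) hA
      set t := m v with htdef
      set A' := A.filter (fun i => t ∉ S i) with hA'def
      have htSv : t ∈ S v := hmS v hvA
      have hA'ss : A' ⊂ A := by
        refine Finset.filter_ssubset.mpr ⟨v, hvA, ?_⟩
        simp [htSv]
      obtain ⟨P', c', hP'A, hc'mem, hcover', hdisj'⟩ := ih A' hA'ss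
        (fun i hi => hconn i (Finset.mem_of_subset (Finset.filter_subset _ _) hi))
        (fun i hi => hne i (Finset.mem_of_subset (Finset.filter_subset _ _) hi))
      have hvP' : v ∉ P' := by
        intro hv
        have := hP'A hv
        rw [hA'def, Finset.mem_filter] at this
        exact this.2 htSv
      have hkey : ∀ q ∈ A, (S v ∩ S q).Nonempty → t ∈ S q := by
        intro q hq ⟨x, hxv, hxq⟩
        exact key hT r (hconn q hq) (m q) t (hmS q hq) (hmgate q hq) (hmgate v hvA)
          (hvmax q hq) hxq hxv
      refine ⟨insert v P', Function.update c' v t, ?_, ?_, ?_, ?_⟩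
      · intro p hp
        rcases Finset.mem_insert.mp hp with rfl | hp
        · exact hvA
        · exact Finset.mem_of_subset (Finset.filter_subset _ _) (hP'A hp)
      · intro p hp
        rcases Finset.mem_insert.mp hp with rfl | hp
        · rw [Function.update_self]; exact htSv
        · have hpv : p ≠ v := fun h => hvP' (h ▸ hp)
          rw [Function.update_of_ne hpv]; exact hc'mem p hp
      · intro i hi
        by_cases hti : t ∈ S i
        · exact ⟨v, Finset.mem_insert_self _ _, by rw [Function.update_self]; exact hti⟩
        · have hi' : i ∈ A' := by rw [hA'def, Finset.mem_filter]; exact ⟨hi, hti⟩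
          obtain ⟨p, hp, hcp⟩ := hcover' i hi'
          have hpv : p ≠ v := fun h => hvP' (h ▸ hp)
          exact ⟨p, Finset.mem_insert_of_mem hp, by rwa [Function.update_of_ne hpv]⟩
      · intro p hp q hq hpq
        have hdisjv : ∀ q ∈ P', S v ∩ S q = ∅ := by
          intro q hq
          by_contra hcon
          have hq' := hP'A hq
          rw [hA'def, Finset.mem_filter] at hq'
          exact hq'.2 (hkey q hq'.1 (Set.nonempty_iff_ne_empty.mpr hcon))
        rcases Finset.mem_insert.mp hp with hp1 | hp1 <;>
          rcases Finset.mem_insert.mp hq with hq1 | hq1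
        · exact absurd (hp1.trans hq1.symm) hpq
        · rw [hp1]; exact hdisjv q hq1
        · rw [hq1, Set.inter_comm]; exact hdisjv p hp1
        · exact hdisj' p hp1 q hq1 hpq

end TreeAux2

section MainAux
open TreeAux TreeAux2

variable {V : Type} [Fintype V]

lemma finsum_mem_set_eq (s : Set V) (f : V → ℝ) :
    ∑ᶠ v ∈ s, f v = ∑ v ∈ (Set.toFinite s).toFinset, f v :=
  finsum_mem_eq_finite_toFinset_sum f (Set.toFinite s)

lemma tdNonempty {H : Hypergraph' V} (td : H.TreeDecomp) : Nonempty (Fin td.n) :=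
  td.isTree.isConnected.nonempty

/-- The trivial one-bag tree decomposition. -/
noncomputable def Hypergraph'.trivTD (H : Hypergraph' V) : H.TreeDecomp where
  n := 1
  tree := ⊥
  isTree := by
    constructor
    · constructor
      intro u v
      rw [Subsingleton.elim u v]
    · exact SimpleGraph.isAcyclic_bot
  bag _ := H.verts
  bag_subset _ := le_refl _
  verts_covered v hv := ⟨0, hv⟩
  edges_covered e he := ⟨0, H.edge_subset e he⟩
  bags_connected v t₁ t₂ h₁ h₂ := by
    have : t₁ = t₂ := Subsingleton.elim _ _
    subst this
    rfl

variable {H : Hypergraph' V}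

lemma bagsum_le_muWidth (td : H.TreeDecomp) (μ : V → ℝ) (t : Fin td.n) :
    ∑ᶠ v ∈ td.bag t, μ v ≤ td.muWidth μ :=
  le_ciSup (f := fun t => ∑ᶠ v ∈ td.bag t, μ v)
    (Set.Finite.bddAbove (Set.finite_range _)) t

lemma muWidth_td_nonneg (td : H.TreeDecomp) {μ : V → ℝ} (hμ : ∀ v, 0 ≤ μ v) :
    0 ≤ td.muWidth μ := by
  obtain ⟨t⟩ := tdNonempty td
  refine le_trans ?_ (bagsum_le_muWidth td μ t)
  rw [finsum_mem_set_eq]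
  exact Finset.sum_nonneg fun v _ => hμ v

lemma muWidth_bddBelow (μ : V → ℝ) (hμ : ∀ v, 0 ≤ μ v) :
    BddBelow {w | ∃ td : H.TreeDecomp, td.muWidth μ = w} := by
  refine ⟨0, ?_⟩
  rintro w ⟨td, rfl⟩
  exact muWidth_td_nonneg td hμ

lemma muWidth_le_td (μ : V → ℝ) (hμ : ∀ v, 0 ≤ μ v) (td : H.TreeDecomp) :
    H.muWidth μ ≤ td.muWidth μ :=
  csInf_le (muWidth_bddBelow μ hμ) ⟨td, rfl⟩

lemma muWidth_le_card (μ : V → ℝ) (hμ : ∀ v, 0 ≤ μ v ∧ μ v ≤ 1) :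
    H.muWidth μ ≤ (Fintype.card V : ℝ) := by
  refine le_trans (muWidth_le_td μ (fun v => (hμ v).1) H.trivTD) ?_
  haveI := tdNonempty H.trivTD
  refine ciSup_le fun t => ?_
  rw [finsum_mem_set_eq]
  calc ∑ v ∈ (Set.toFinite _).toFinset, μ v ≤ ∑ _v ∈ (Set.toFinite (H.trivTD.bag t)).toFinset, (1:ℝ) :=
        Finset.sum_le_sum fun v _ => (hμ v).2
    _ = ((Set.toFinite (H.trivTD.bag t)).toFinset.card : ℝ) := by simp
    _ ≤ (Fintype.card V : ℝ) := by
        exact_mod_cast Nat.cast_le.mpr (Finset.card_le_card (Finset.subset_univ _))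

lemma muWidth_le_aw (μ : V → ℝ) (hμ : H.IsFracIndep μ) :
    H.muWidth μ ≤ H.adaptiveWidth := by
  refine le_csSup ⟨(Fintype.card V : ℝ), ?_⟩ ⟨μ, hμ, rfl⟩
  rintro w ⟨ν, hν, rfl⟩
  exact muWidth_le_card ν hν.1

end MainAux

section MainAux2
open TreeAux TreeAux2

variable {V : Type} [Fintype V] {H : Hypergraph' V}

lemma sum_biUnion_le' {ι : Type} [DecidableEq ι] [DecidableEq V] (P : Finset ι)
    (g : ι → Finset V) (f : V → ℝ) (hf : ∀ v, 0 ≤ f v) :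
    ∑ v ∈ P.biUnion g, f v ≤ ∑ p ∈ P, ∑ v ∈ g p, f v := by
  induction P using Finset.induction with
  | empty => simp
  | @insert a s hq ih =>
    rw [Finset.biUnion_insert, Finset.sum_insert hq]
    have h1 : ∑ v ∈ g a ∪ s.biUnion g, f v + ∑ v ∈ g a ∩ s.biUnion g, f v =
        ∑ v ∈ g a, f v + ∑ v ∈ s.biUnion g, f v := Finset.sum_union_inter
    have h2 : 0 ≤ ∑ v ∈ g a ∩ s.biUnion g, f v :=
      Finset.sum_nonneg fun v _ => hf v
    linarith

lemma indepSet_bddAbove :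
    BddAbove {n | ∃ I : Set V, H.IsIndepSet I ∧ I.ncard = n} := by
  refine ⟨Fintype.card V, ?_⟩
  rintro n ⟨I, hI, rfl⟩
  calc I.ncard ≤ (Set.univ : Set V).ncard :=
        Set.ncard_le_ncard (Set.subset_univ I) Set.finite_univ
    _ = Fintype.card V := by rw [Set.ncard_univ, Nat.card_eq_fintype_card]

lemma weight_le_td (μ : V → ℝ) (hμ : H.IsFracIndep μ) (td : H.TreeDecomp) :
    H.weight μ ≤ (H.indepNum : ℝ) * td.muWidth μ := by
  classical
  have h0 : ∀ v, 0 ≤ μ v := fun v => (hμ.1 v).1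
  obtain ⟨P, c, hPA, hcmem, hcover, hdisj⟩ := greedy td.isTree
    (fun v => {t | v ∈ td.bag t}) (Set.toFinite H.verts).toFinset
    (fun v _ x hx y hy => td.bags_connected v x y hx hy)
    (fun v hv => td.verts_covered v ((Set.Finite.mem_toFinset _).mp hv))
  have hindep : H.IsIndepSet ↑P := by
    constructor
    · intro u hu
      exact (Set.Finite.mem_toFinset _).mp (hPA hu)
    · rintro u hu v hv huv e he ⟨hue, hve⟩
      obtain ⟨t, hte⟩ := td.edges_covered e he
      have hd := hdisj u (Finset.mem_coe.mp hu) v (Finset.mem_coe.mp hv) huv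
      have : t ∈ ({t | u ∈ td.bag t} ∩ {t | v ∈ td.bag t} : Set (Fin td.n)) :=
        ⟨hte hue, hte hve⟩
      rw [hd] at this
      exact this
  have hcardN : P.card ≤ H.indepNum :=
    le_csSup indepSet_bddAbove ⟨↑P, hindep, Set.ncard_coe_finset P⟩
  have hcard : (P.card : ℝ) ≤ (H.indepNum : ℝ) := Nat.cast_le.mpr hcardN
  have hcov : (Set.toFinite H.verts).toFinset ⊆
      P.biUnion (fun p => (Set.toFinite (td.bag (c p))).toFinset) := by
    intro v hv
    obtain ⟨p, hp, hcp⟩ := hcover v hv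
    exact Finset.mem_biUnion.mpr ⟨p, hp, (Set.Finite.mem_toFinset _).mpr hcp⟩
  rw [Hypergraph'.weight, finsum_mem_set_eq]
  calc ∑ v ∈ (Set.toFinite H.verts).toFinset, μ v
      ≤ ∑ v ∈ P.biUnion (fun p => (Set.toFinite (td.bag (c p))).toFinset), μ v :=
        Finset.sum_le_sum_of_subset_of_nonneg hcov (fun v _ _ => h0 v)
    _ ≤ ∑ p ∈ P, ∑ v ∈ (Set.toFinite (td.bag (c p))).toFinset, μ v :=
        sum_biUnion_le' P _ μ h0
    _ ≤ ∑ _p ∈ P, td.muWidth μ := by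
        refine Finset.sum_le_sum fun p _ => ?_
        rw [← finsum_mem_set_eq]
        exact bagsum_le_muWidth td μ (c p)
    _ = (P.card : ℝ) * td.muWidth μ := by rw [Finset.sum_const, nsmul_eq_mul]
    _ ≤ (H.indepNum : ℝ) * td.muWidth μ :=
        mul_le_mul_of_nonneg_right hcard (muWidth_td_nonneg td h0)

lemma one_le_indepNum (h1 : H.edges.Nonempty) : 1 ≤ H.indepNum := by
  obtain ⟨e, he⟩ := h1
  obtain ⟨v0, hv0⟩ := H.edge_nonempty e he
  have hv0V : v0 ∈ H.verts := H.edge_subset e he hv0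
  refine le_csSup indepSet_bddAbove ⟨{v0}, ⟨?_, ?_⟩, Set.ncard_singleton v0⟩
  · intro u hu; rw [Set.mem_singleton_iff] at hu; subst hu; exact hv0V
  · intro u hu v hv huv
    rw [Set.mem_singleton_iff] at hu hv
    exact absurd (hu.trans hv.symm) huv

lemma one_le_aw (h1 : H.edges.Nonempty) : 1 ≤ H.adaptiveWidth := by
  classical
  obtain ⟨e, he⟩ := h1
  obtain ⟨v0, hv0⟩ := H.edge_nonempty e he
  have hv0V : v0 ∈ H.verts := H.edge_subset e he hv0
  set μ0 : V → ℝ := fun v => if v = v0 then (1:ℝ) else 0 with hμ0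
  have hfi : H.IsFracIndep μ0 := by
    refine ⟨fun v => ?_, fun v hv => ?_, fun e' he' => ?_⟩
    · dsimp [μ0]; split <;> norm_num
    · dsimp [μ0]; split
      · rename_i hvv; exact absurd (hvv ▸ hv0V) hv
      · rfl
    · rw [finsum_mem_set_eq]
      dsimp [μ0]
      rw [Finset.sum_ite_eq' _ v0 (fun _ => (1:ℝ))]
      split <;> norm_num
  have h1le : ∀ td : H.TreeDecomp, 1 ≤ td.muWidth μ0 := by
    intro td
    obtain ⟨t, ht⟩ := td.verts_covered v0 hv0V
    refine le_trans ?_ (bagsum_le_muWidth td μ0 t)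
    rw [finsum_mem_set_eq]
    dsimp [μ0]
    rw [Finset.sum_ite_eq' _ v0 (fun _ => (1:ℝ))]
    rw [if_pos ((Set.Finite.mem_toFinset _).mpr ht)]
  have hmw : 1 ≤ H.muWidth μ0 := by
    refine le_csInf ⟨_, H.trivTD, rfl⟩ ?_
    rintro w ⟨td, rfl⟩
    exact h1le td
  exact le_trans hmw (muWidth_le_aw μ0 hfi)

lemma zero_fracIndep : H.IsFracIndep (fun _ => (0:ℝ)) := by
  refine ⟨fun v => by norm_num, fun v _ => rfl, fun e he => ?_⟩
  rw [finsum_mem_set_eq]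
  simp

lemma fracIndepNum_le (h1 : H.edges.Nonempty) :
    H.fracIndepNum ≤ (H.indepNum : ℝ) * H.adaptiveWidth := by
  refine csSup_le ⟨H.weight (fun _ => 0), fun _ => 0, zero_fracIndep, rfl⟩ ?_
  rintro w ⟨μ, hμ, rfl⟩
  have h0 : ∀ v, 0 ≤ μ v := fun v => (hμ.1 v).1
  have hα1 : (1:ℝ) ≤ (H.indepNum : ℝ) := by exact_mod_cast one_le_indepNum h1
  have hαpos : (0:ℝ) < (H.indepNum : ℝ) := lt_of_lt_of_le one_pos hα1
  have hmw : H.weight μ / (H.indepNum : ℝ) ≤ H.muWidth μ := by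
    refine le_csInf ⟨_, H.trivTD, rfl⟩ ?_
    rintro b ⟨td, rfl⟩
    rw [div_le_iff₀ hαpos, mul_comm]
    exact weight_le_td μ hμ td
  have h2 : H.weight μ ≤ (H.indepNum : ℝ) * H.muWidth μ := by
    rw [div_le_iff₀ hαpos, mul_comm] at hmw
    exact hmw
  refine le_trans h2 (mul_le_mul_of_nonneg_left (muWidth_le_aw μ hμ) (le_of_lt hαpos))

end MainAux2

theorem stmt0 {V : Type} [Fintype V] (H : Hypergraph' V)
    (h1 : H.edges.Nonempty) (h2 : ∀ v ∈ H.verts, ∃ e ∈ H.edges, v ∈ e) :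
    (H.indepNum : ℝ) ≥ 1 / 2 + H.fracIndepNum / (4 * H.adaptiveWidth) := by
  have hα1 : (1:ℝ) ≤ (H.indepNum : ℝ) := by exact_mod_cast one_le_indepNum h1
  have hA : (1:ℝ) ≤ H.adaptiveWidth := one_le_aw h1
  have hf : H.fracIndepNum ≤ (H.indepNum : ℝ) * H.adaptiveWidth := fracIndepNum_le h1
  set a : ℝ := (H.indepNum : ℝ) with ha
  set W : ℝ := H.adaptiveWidth with hW
  have hWpos : (0:ℝ) < 4 * W := by linarith
  have hdiv : H.fracIndepNum / (4 * W) ≤ (a * W) / (4 * W) :=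
    (div_le_div_iff_of_pos_right hWpos).mpr hf
  have hEq : (a * W) / (4 * W) = a / 4 := by
    have hW0 : W ≠ 0 := by linarith
    field_simp
  rw [ge_iff_le]
  calc 1 / 2 + H.fracIndepNum / (4 * W) ≤ 1 / 2 + a / 4 := by rw [← hEq]; linarith
    _ ≤ a := by linarith

end
end

section
/- For every digraph H, the independence number of the contour of H equals the independence number of the contour of the condensation H/∼, that is, α(Γ(H)) = α(Γ(H/∼)). -/
noncomputable section

namespace Digraph

variable {V : Type}

lemma cond_reaches_of_reaches (H : Digraph V) {u v : V} (h : H.Reaches u v) :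
    H.cond.Reaches (Quotient.mk H.sccSetoid u) (Quotient.mk H.sccSetoid v) := by
  induction h with
  | refl => exact Relation.ReflTransGen.refl
  | @tail b c _ hadj ih =>
    by_cases hq : Quotient.mk H.sccSetoid b = Quotient.mk H.sccSetoid c
    · rwa [← hq]
    · exact ih.tail ⟨hq, b, c, rfl, rfl, hadj⟩

lemma reaches_of_cond_reaches (H : Digraph V) {X Y : Quotient H.sccSetoid}
    (h : H.cond.Reaches X Y) {u v : V} (hu : Quotient.mk H.sccSetoid u = X)
    (hv : Quotient.mk H.sccSetoid v = Y) : H.Reaches u v := by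
  induction h generalizing v with
  | refl =>
    exact (Quotient.exact (hu.trans hv.symm) : H.sccSetoid.r u v).1
  | @tail Z Y _ hadj ih =>
    obtain ⟨-, a, b, ha, hb, hab⟩ := hadj
    exact ((ih ha).tail hab).trans
      (Quotient.exact (hb.trans hv.symm) : H.sccSetoid.r b v).1

lemma inSourceComp_cond_iff (H : Digraph V) (v : V) :
    H.cond.InSourceComp (Quotient.mk H.sccSetoid v) ↔ H.InSourceComp v := by
  constructor
  · intro h u hu
    exact H.reaches_of_cond_reaches (h _ (H.cond_reaches_of_reaches hu)) rfl rfl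
  · intro h U hU
    obtain ⟨u, rfl⟩ := Quotient.exists_rep U
    exact H.cond_reaches_of_reaches (h u (H.reaches_of_cond_reaches hU rfl rfl))

lemma exists_source_reaches (H : Digraph V) [Fintype V] (v : V) :
    ∃ s, H.InSourceComp s ∧ H.Reaches s v := by
  classical
  obtain ⟨s, hs, hmin⟩ := Set.exists_min_image {u | H.Reaches u v}
    (fun s => ({u | H.Reaches u s}).ncard) (Set.toFinite _)
    ⟨v, Relation.ReflTransGen.refl⟩
  refine ⟨s, ?_, hs⟩
  intro u hu
  by_contra hnr
  have hsub : {w | H.Reaches w u} ⊆ {w | H.Reaches w s} := fun w hw => hw.trans hu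
  have hss : {w | H.Reaches w u} ⊂ {w | H.Reaches w s} :=
    (Set.ssubset_iff_of_subset hsub).mpr ⟨s, Relation.ReflTransGen.refl, hnr⟩
  have h1 := Set.ncard_lt_ncard hss (Set.toFinite _)
  have h2 := hmin u (hu.trans hs)
  omega

lemma injOn_of_indep (H : Digraph V) [Fintype V] {I : Set V}
    (hI : H.contour.IsIndepSet I) :
    Set.InjOn (Quotient.mk H.sccSetoid) I := by
  intro u hu v hv hq
  by_contra hne
  obtain ⟨hr1, hr2⟩ := (Quotient.exact hq : H.sccSetoid.r u v)
  obtain ⟨s, hsrc, hsv⟩ := H.exists_source_reaches u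
  have hu' : u ∈ H.reachSet s \ {x | H.InSourceComp x} := ⟨hsv, hI.1 hu⟩
  have hv' : v ∈ H.reachSet s \ {x | H.InSourceComp x} := ⟨hsv.trans hr1, hI.1 hv⟩
  exact hI.2 u hu v hv hne _ ⟨⟨s, hsrc, rfl⟩, ⟨u, hu'⟩⟩ ⟨hu', hv'⟩

lemma indep_image (H : Digraph V) [Fintype V] {I : Set V}
    (hI : H.contour.IsIndepSet I) :
    H.cond.contour.IsIndepSet (Quotient.mk H.sccSetoid '' I) := by
  constructor
  · rintro X ⟨u, hu, rfl⟩
    exact fun h => hI.1 hu ((H.inSourceComp_cond_iff u).mp h)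
  · rintro X ⟨u, hu, rfl⟩ Y ⟨v, hv, rfl⟩ hne e ⟨⟨S, hS, rfl⟩, -⟩ ⟨hX, hY⟩
    obtain ⟨s, rfl⟩ := Quotient.exists_rep S
    have hsrc : H.InSourceComp s := (H.inSourceComp_cond_iff s).mp hS
    have huv : u ≠ v := fun h => hne (by rw [h])
    have hu' : u ∈ H.reachSet s \ {x | H.InSourceComp x} :=
      ⟨H.reaches_of_cond_reaches hX.1 rfl rfl, hI.1 hu⟩
    have hv' : v ∈ H.reachSet s \ {x | H.InSourceComp x} :=
      ⟨H.reaches_of_cond_reaches hY.1 rfl rfl, hI.1 hv⟩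
    exact hI.2 u hu v hv huv _ ⟨⟨s, hsrc, rfl⟩, ⟨u, hu'⟩⟩ ⟨hu', hv'⟩

lemma indep_out (H : Digraph V) [Fintype V] {I : Set (Quotient H.sccSetoid)}
    (hI : H.cond.contour.IsIndepSet I) :
    H.contour.IsIndepSet (Quotient.out '' I) := by
  constructor
  · rintro u ⟨X, hX, rfl⟩ h
    exact hI.1 hX (X.out_eq ▸ (H.inSourceComp_cond_iff X.out).mpr h)
  · rintro u ⟨X, hX, rfl⟩ v ⟨Y, hY, rfl⟩ hne e ⟨⟨s, hs, rfl⟩, -⟩ ⟨hu, hv⟩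
    have hXY : X ≠ Y := fun h => hne (by rw [h])
    have hX' : X ∈ H.cond.reachSet (Quotient.mk H.sccSetoid s) \
        {Z | H.cond.InSourceComp Z} :=
      ⟨X.out_eq ▸ H.cond_reaches_of_reaches hu.1,
       X.out_eq ▸ fun h => hu.2 ((H.inSourceComp_cond_iff X.out).mp (X.out_eq ▸ h))⟩
    have hY' : Y ∈ H.cond.reachSet (Quotient.mk H.sccSetoid s) \
        {Z | H.cond.InSourceComp Z} :=
      ⟨Y.out_eq ▸ H.cond_reaches_of_reaches hv.1,
       Y.out_eq ▸ fun h => hv.2 ((H.inSourceComp_cond_iff Y.out).mp (Y.out_eq ▸ h))⟩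
    exact hI.2 X hX Y hY hXY _
      ⟨⟨Quotient.mk H.sccSetoid s, (H.inSourceComp_cond_iff s).mpr hs, rfl⟩, ⟨X, hX'⟩⟩
      ⟨hX', hY'⟩

end Digraph

theorem stmt1 {V : Type} [Fintype V] (H : Digraph V) :
    H.contour.indepNum = H.cond.contour.indepNum := by
  have hset : {n | ∃ I : Set V, H.contour.IsIndepSet I ∧ I.ncard = n} =
      {n | ∃ I : Set (Quotient H.sccSetoid),
        H.cond.contour.IsIndepSet I ∧ I.ncard = n} := by
    ext n
    constructor
    · rintro ⟨I, hI, rfl⟩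
      exact ⟨_, H.indep_image hI,
        Set.ncard_image_of_injOn (H.injOn_of_indep hI)⟩
    · rintro ⟨I, hI, rfl⟩
      exact ⟨_, H.indep_out hI,
        Set.ncard_image_of_injective _ Quotient.out_injective⟩
  unfold Hypergraph'.indepNum
  rw [hset]

end
end

section
/- For every digraph H, the adaptive width of the contour of H equals the adaptive width of the contour of the condensation H/∼, that is, aw(Γ(H)) = aw(Γ(H/∼)). -/
noncomputable section

namespace Stmt3Aux

open Hypergraph' Digraph

variable {V : Type}

/-! ### Condensation reachability lemmas -/

theorem reaches_cond (G : Digraph V) {u v : V} (h : G.Reaches u v) :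
    G.cond.Reaches (Quotient.mk G.sccSetoid u) (Quotient.mk G.sccSetoid v) := by
  induction h with
  | refl => exact Relation.ReflTransGen.refl
  | @tail b c _ hadj ih =>
    by_cases hq : Quotient.mk G.sccSetoid b = Quotient.mk G.sccSetoid c
    · rwa [← hq]
    · exact ih.tail ⟨hq, b, c, rfl, rfl, hadj⟩

theorem scc_reaches (G : Digraph V) {u v : V}
    (h : Quotient.mk G.sccSetoid u = Quotient.mk G.sccSetoid v) : G.Reaches u v :=
  (Quotient.exact h).1

theorem cond_reaches (G : Digraph V) {X Y : Quotient G.sccSetoid} (h : G.cond.Reaches X Y) :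
    ∀ u v, Quotient.mk G.sccSetoid u = X → Quotient.mk G.sccSetoid v = Y → G.Reaches u v := by
  induction h with
  | refl => exact fun u v hu hv => scc_reaches G (hu.trans hv.symm)
  | @tail Z Y _ hadj ih =>
    intro u v hu hv
    obtain ⟨-, a, b, ha, hb, hab⟩ := hadj
    exact ((ih u a hu ha).tail hab).trans (scc_reaches G (hb.trans hv.symm))

theorem inSourceComp_cond_iff (G : Digraph V) (v : V) :
    G.cond.InSourceComp (Quotient.mk G.sccSetoid v) ↔ G.InSourceComp v := by
  constructor
  · intro h u hu
    exact cond_reaches G (h _ (reaches_cond G hu)) v u rfl rfl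
  · intro h U hU
    obtain ⟨u, rfl⟩ := Quotient.exists_rep U
    exact reaches_cond G (h u (cond_reaches G hU u v rfl rfl))

theorem inSourceComp_congr (G : Digraph V) {u v : V}
    (h1 : G.Reaches u v) (h2 : G.Reaches v u) : G.InSourceComp u ↔ G.InSourceComp v := by
  constructor
  · intro h w hw
    exact h2.trans (h w (hw.trans h2))
  · intro h w hw
    exact h1.trans (h w (hw.trans h1))

theorem exists_source_reaches [Finite V] (G : Digraph V) (v : V) :
    ∃ s, G.InSourceComp s ∧ G.Reaches s v := by
  obtain ⟨u, hu, hmin⟩ := Set.Finite.exists_minimalFor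
    (fun u => ({w | G.Reaches w u}).ncard) {u | G.Reaches u v}
    (Set.toFinite _) ⟨v, Relation.ReflTransGen.refl⟩
  refine ⟨u, ?_, hu⟩
  intro w hw
  have hsub : {x | G.Reaches x w} ⊆ {x | G.Reaches x u} := fun x hx => hx.trans hw
  have hle : ({x | G.Reaches x w}).ncard ≤ ({x | G.Reaches x u}).ncard :=
    Set.ncard_le_ncard hsub (Set.toFinite _)
  have hcard := le_antisymm (hmin (hw.trans hu) hle) hle
  have hEq : {x | G.Reaches x w} = {x | G.Reaches x u} :=
    Set.eq_of_subset_of_ncard_le hsub (le_of_eq hcard) (Set.toFinite _)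
  have : u ∈ {x | G.Reaches x u} := Relation.ReflTransGen.refl
  rw [← hEq] at this
  exact this

theorem image_contour_edge (G : Digraph V) (s : V) :
    Quotient.mk G.sccSetoid '' (G.reachSet s \ {v | G.InSourceComp v}) =
      G.cond.reachSet (Quotient.mk G.sccSetoid s) \ {X | G.cond.InSourceComp X} := by
  ext X
  constructor
  · rintro ⟨v, ⟨hr, hv⟩, rfl⟩
    exact ⟨reaches_cond G hr, fun h => hv ((inSourceComp_cond_iff G v).1 h)⟩
  · rintro ⟨hr, hX⟩
    obtain ⟨x, rfl⟩ := Quotient.exists_rep X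
    exact ⟨x, ⟨cond_reaches G hr s x rfl rfl,
      fun h => hX ((inSourceComp_cond_iff G x).2 h)⟩, rfl⟩

theorem preimage_contour_edge (G : Digraph V) (s : V) :
    Quotient.mk G.sccSetoid ⁻¹'
        (G.cond.reachSet (Quotient.mk G.sccSetoid s) \ {X | G.cond.InSourceComp X}) =
      G.reachSet s \ {v | G.InSourceComp v} := by
  ext v
  constructor
  · rintro ⟨h1, h2⟩
    exact ⟨cond_reaches G h1 s v rfl rfl, fun h => h2 ((inSourceComp_cond_iff G v).2 h)⟩
  · rintro ⟨h1, h2⟩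
    exact ⟨reaches_cond G h1, fun h => h2 ((inSourceComp_cond_iff G v).1 h)⟩

theorem out_contour_edge (G : Digraph V) (s : V) :
    (Quotient.out ⁻¹' (G.reachSet s \ {v | G.InSourceComp v}) : Set (Quotient G.sccSetoid)) =
      G.cond.reachSet (Quotient.mk G.sccSetoid s) \ {X | G.cond.InSourceComp X} := by
  ext X
  have hout : Quotient.mk G.sccSetoid (Quotient.out X) = X := Quotient.out_eq X
  constructor
  · rintro ⟨h1, h2⟩
    refine ⟨?_, fun h => h2 ?_⟩
    · have := reaches_cond G h1; rwa [hout] at this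
    · rw [← hout] at h
      exact (inSourceComp_cond_iff G _).1 h
  · rintro ⟨h1, h2⟩
    refine ⟨cond_reaches G h1 s _ rfl hout, fun h => h2 ?_⟩
    rw [← hout]
    exact (inSourceComp_cond_iff G _).2 h

/-! ### finsum helper lemmas -/

theorem sum_nonneg' [Finite V] {μ : V → ℝ} (hμ : ∀ v, 0 ≤ μ v) (A : Set V) :
    0 ≤ ∑ᶠ v ∈ A, μ v := by
  rw [finsum_mem_eq_finite_toFinset_sum _ (Set.toFinite A)]
  exact Finset.sum_nonneg fun v _ => hμ v

theorem sum_mono [Finite V] {μ : V → ℝ} (hμ : ∀ v, 0 ≤ μ v) {A B : Set V} (h : A ⊆ B) :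
    ∑ᶠ v ∈ A, μ v ≤ ∑ᶠ v ∈ B, μ v := by
  classical
  rw [finsum_mem_eq_finite_toFinset_sum _ (Set.toFinite A),
    finsum_mem_eq_finite_toFinset_sum _ (Set.toFinite B)]
  refine Finset.sum_le_sum_of_subset_of_nonneg ?_ fun v _ _ => hμ v
  intro v hv
  simp only [Set.Finite.mem_toFinset] at hv ⊢
  exact h hv

theorem sum_zero_of_zero [Finite V] {μ : V → ℝ} {A : Set V} (h : ∀ v ∈ A, μ v = 0) :
    ∑ᶠ v ∈ A, μ v = 0 := by
  rw [finsum_mem_eq_finite_toFinset_sum _ (Set.toFinite A)]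
  exact Finset.sum_eq_zero fun v hv => h v ((Set.Finite.mem_toFinset _).1 hv)

theorem sum_fiber {W : Type} [Finite V] [Finite W] (q : V → W) (μ : V → ℝ) (B : Set W) :
    ∑ᶠ v ∈ q ⁻¹' B, μ v = ∑ᶠ X ∈ B, ∑ᶠ v ∈ q ⁻¹' {X}, μ v := by
  have hU : q ⁻¹' B = ⋃ X ∈ B, q ⁻¹' {X} := by
    ext v
    simp
  rw [hU]
  refine finsum_mem_biUnion ?_ (Set.toFinite B) fun i _ => Set.toFinite _
  intro x _ y _ hxy
  refine Set.disjoint_left.2 fun v hv hv' => hxy ?_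
  simp only [Set.mem_preimage, Set.mem_singleton_iff] at hv hv'
  rw [← hv, ← hv']

theorem sum_rep {W : Type} [Finite V] [Finite W] (q : V → W) (r : W → V)
    (hr : ∀ X, q (r X) = X) (μ1 : V → ℝ) (μ2 : W → ℝ)
    (h1 : ∀ v, r (q v) = v → μ1 v = μ2 (q v)) (h2 : ∀ v, r (q v) ≠ v → μ1 v = 0)
    (B : Set V) :
    ∑ᶠ v ∈ B, μ1 v = ∑ᶠ X ∈ r ⁻¹' B, μ2 X := by
  classical
  rw [finsum_mem_eq_finite_toFinset_sum _ (Set.toFinite B),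
    finsum_mem_eq_finite_toFinset_sum _ (Set.toFinite (r ⁻¹' B))]
  rw [← Finset.sum_subset (Finset.filter_subset (fun v => r (q v) = v) (Set.toFinite B).toFinset)
    (fun v hvB hv => h2 v (by
      simp only [Finset.mem_filter, not_and] at hv
      exact hv hvB))]
  refine Finset.sum_bij' (fun v _ => q v) (fun X _ => r X) ?_ ?_ ?_ ?_ ?_
  · intro v hv
    simp only [Finset.mem_filter, Set.Finite.mem_toFinset, Set.mem_preimage] at hv ⊢
    rw [hv.2]
    exact hv.1
  · intro X hX
    simp only [Set.Finite.mem_toFinset, Set.mem_preimage] at hX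
    simp only [Finset.mem_filter, Set.Finite.mem_toFinset]
    exact ⟨hX, by rw [hr]⟩
  · intro v hv
    simp only [Finset.mem_filter] at hv
    exact hv.2
  · intro X _
    exact hr X
  · intro v hv
    simp only [Finset.mem_filter] at hv
    exact h1 v hv.2

/-! ### tree decomposition helpers -/

/-- The one-bag tree decomposition. -/
def trivialTD (H : Hypergraph' V) : H.TreeDecomp where
  n := 1
  tree := ⊥
  isTree := by
    constructor
    · rw [SimpleGraph.connected_iff]
      exact ⟨fun a b => by obtain rfl := Subsingleton.elim a b; exact SimpleGraph.Reachable.refl _,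
        ⟨0⟩⟩
    · exact SimpleGraph.isAcyclic_bot
  bag _ := H.verts
  bag_subset _ := le_refl _
  verts_covered v hv := ⟨0, hv⟩
  edges_covered e he := ⟨0, H.edge_subset e he⟩
  bags_connected v t₁ t₂ h₁ h₂ := by
    obtain rfl : t₁ = t₂ := Subsingleton.elim _ _
    rfl

theorem td_width_nonneg [Finite V] {H : Hypergraph' V} (td : H.TreeDecomp) {μ : V → ℝ}
    (hμ : ∀ v, 0 ≤ μ v) : 0 ≤ td.muWidth μ := by
  obtain ⟨t⟩ : Nonempty (Fin td.n) := td.isTree.isConnected.nonempty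
  exact le_trans (sum_nonneg' hμ (td.bag t))
    (le_ciSup (f := fun t => ∑ᶠ v ∈ td.bag t, μ v)
      (Set.Finite.bddAbove (Set.finite_range _)) t)

theorem muWidth_le_td [Finite V] {H : Hypergraph' V} (td : H.TreeDecomp) (μ : V → ℝ)
    (hμ : ∀ v, 0 ≤ μ v) : H.muWidth μ ≤ td.muWidth μ :=
  csInf_le ⟨0, by rintro w ⟨td', rfl⟩; exact td_width_nonneg td' hμ⟩ ⟨td, rfl⟩

theorem muWidth_le_general {W : Type} [Finite V] [Finite W]
    (Hs : Hypergraph' V) (Ht : Hypergraph' W) (μs : V → ℝ) (μt : W → ℝ)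
    (hμs : ∀ v, 0 ≤ μs v)
    (g : V → W)
    (hv1 : ∀ v, g v ∈ Ht.verts → v ∈ Hs.verts)
    (hv2 : ∀ v ∈ Hs.verts, g v ∈ Ht.verts)
    (he : ∀ e ∈ Hs.edges, ∃ e' ∈ Ht.edges, e ⊆ g ⁻¹' e')
    (hsum : ∀ B : Set W, (∑ᶠ v ∈ g ⁻¹' B, μs v) = ∑ᶠ w ∈ B, μt w) :
    Hs.muWidth μs ≤ Ht.muWidth μt := by
  refine le_csInf ⟨_, trivialTD Ht, rfl⟩ ?_
  rintro w ⟨td, rfl⟩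
  let td' : Hs.TreeDecomp :=
    { n := td.n
      tree := td.tree
      isTree := td.isTree
      bag := fun t => g ⁻¹' (td.bag t)
      bag_subset := fun t v hv => hv1 v (td.bag_subset t hv)
      verts_covered := fun v hv => td.verts_covered (g v) (hv2 v hv)
      edges_covered := fun e heE => by
        obtain ⟨e', he', hsub⟩ := he e heE
        obtain ⟨t, ht⟩ := td.edges_covered e' he'
        exact ⟨t, hsub.trans (Set.preimage_mono ht)⟩
      bags_connected := fun v t₁ t₂ h₁ h₂ => td.bags_connected (g v) t₁ t₂ h₁ h₂ }
  refine le_trans (muWidth_le_td td' μs hμs) (le_of_eq ?_)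
  show (⨆ t, ∑ᶠ v ∈ g ⁻¹' (td.bag t), μs v) = ⨆ t, ∑ᶠ w ∈ td.bag t, μt w
  exact iSup_congr fun t => hsum (td.bag t)

theorem aw_set_nonempty [Finite V] (H : Hypergraph' V) :
    Set.Nonempty {w | ∃ μ : V → ℝ, H.IsFracIndep μ ∧ H.muWidth μ = w} := by
  refine ⟨_, fun _ => 0, ⟨fun v => ⟨le_refl 0, zero_le_one⟩, fun _ _ => rfl, fun e _ => ?_⟩, rfl⟩
  rw [sum_zero_of_zero fun _ _ => rfl]
  exact zero_le_one

theorem aw_set_bddAbove [Finite V] (H : Hypergraph' V) :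
    BddAbove {w | ∃ μ : V → ℝ, H.IsFracIndep μ ∧ H.muWidth μ = w} := by
  have := Fintype.ofFinite V
  refine ⟨(Fintype.card V : ℝ), ?_⟩
  rintro w ⟨μ, hμ, rfl⟩
  refine (muWidth_le_td (trivialTD H) μ fun v => (hμ.1 v).1).trans ?_
  have h1 : (trivialTD H).muWidth μ = ∑ᶠ v ∈ H.verts, μ v := by
    show (⨆ _t : Fin 1, ∑ᶠ v ∈ H.verts, μ v) = _
    exact ciSup_const
  rw [h1]
  calc ∑ᶠ v ∈ H.verts, μ v ≤ ∑ v : V, μ v := by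
        rw [finsum_mem_eq_finite_toFinset_sum _ (Set.toFinite _)]
        exact Finset.sum_le_sum_of_subset_of_nonneg (Finset.subset_univ _)
          fun v _ _ => (hμ.1 v).1
    _ ≤ ∑ _v : V, (1 : ℝ) := Finset.sum_le_sum fun v _ => (hμ.1 v).2
    _ = Fintype.card V := by simp

end Stmt3Aux

theorem stmt3 {V : Type} [Fintype V] (H : Digraph V) :
    H.contour.adaptiveWidth = H.cond.contour.adaptiveWidth := by
  classical
  haveI hQfin : Finite (Quotient H.sccSetoid) := Quotient.finite _
  set q := Quotient.mk H.sccSetoid with hq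
  apply le_antisymm
  · refine csSup_le (Stmt3Aux.aw_set_nonempty _) ?_
    rintro w ⟨μ1, hμ1, rfl⟩
    set μ2 : Quotient H.sccSetoid → ℝ := fun X => ∑ᶠ v ∈ q ⁻¹' {X}, μ1 v with hμ2def
    have hnn2 : ∀ X, 0 ≤ μ2 X := fun X => Stmt3Aux.sum_nonneg' (fun v => (hμ1.1 v).1) _
    have hzero : ∀ X, H.cond.InSourceComp X → μ2 X = 0 := by
      intro X hX
      refine Stmt3Aux.sum_zero_of_zero ?_
      intro v hv
      have hqv : q v = X := hv
      apply hμ1.2.1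
      intro hvmem
      exact hvmem ((Stmt3Aux.inSourceComp_cond_iff H v).1 (by rw [← hq, hqv]; exact hX))
    have hub2 : ∀ X, μ2 X ≤ 1 := by
      intro X
      obtain ⟨x, rfl⟩ := Quotient.exists_rep X
      by_cases hX : H.cond.InSourceComp (q x)
      · rw [hzero _ hX]; exact zero_le_one
      · have hnsrc : ¬ H.InSourceComp x :=
          fun h => hX ((Stmt3Aux.inSourceComp_cond_iff H x).2 h)
        obtain ⟨s, hs, hsr⟩ := Stmt3Aux.exists_source_reaches H x
        have hedge : (H.reachSet s \ {v | H.InSourceComp v}) ∈ H.contour.edges :=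
          ⟨⟨s, hs, rfl⟩, ⟨x, hsr, hnsrc⟩⟩
        refine le_trans (Stmt3Aux.sum_mono (fun v => (hμ1.1 v).1) ?_) (hμ1.2.2 _ hedge)
        intro v hv
        have hqv : q v = q x := hv
        have hvout : H.Reaches v x ∧ H.Reaches x v := Quotient.exact hqv
        refine ⟨hsr.trans hvout.2, fun hsv => hnsrc ?_⟩
        exact (Stmt3Aux.inSourceComp_congr H hvout.2 hvout.1).2 hsv
    have hfi2 : H.cond.contour.IsFracIndep μ2 := by
      refine ⟨fun X => ⟨hnn2 X, hub2 X⟩, ?_, ?_⟩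
      · intro X hX
        exact hzero X (not_not.1 hX)
      · rintro e ⟨⟨S, hS, rfl⟩, hne⟩
        obtain ⟨s0, rfl⟩ := Quotient.exists_rep S
        have hs : H.InSourceComp s0 := (Stmt3Aux.inSourceComp_cond_iff H s0).1 hS
        have hpre : q ⁻¹' (H.cond.reachSet (q s0) \ {X | H.cond.InSourceComp X}) =
            H.reachSet s0 \ {v | H.InSourceComp v} := Stmt3Aux.preimage_contour_edge H s0
        have himg : q '' (H.reachSet s0 \ {v | H.InSourceComp v}) =
            H.cond.reachSet (q s0) \ {X | H.cond.InSourceComp X} :=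
          Stmt3Aux.image_contour_edge H s0
        have he1ne : (H.reachSet s0 \ {v | H.InSourceComp v}).Nonempty :=
          Set.Nonempty.of_image (himg.symm ▸ hne)
        have hedge1 : (H.reachSet s0 \ {v | H.InSourceComp v}) ∈ H.contour.edges :=
          ⟨⟨_, hs, rfl⟩, he1ne⟩
        calc (∑ᶠ X ∈ H.cond.reachSet (q s0) \ {X | H.cond.InSourceComp X}, μ2 X)
            = ∑ᶠ v ∈ q ⁻¹' (H.cond.reachSet (q s0) \ {X | H.cond.InSourceComp X}), μ1 v :=
              (Stmt3Aux.sum_fiber q μ1 _).symm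
          _ ≤ 1 := by rw [hpre]; exact hμ1.2.2 _ hedge1
    have hmw : H.contour.muWidth μ1 ≤ H.cond.contour.muWidth μ2 := by
      refine Stmt3Aux.muWidth_le_general _ _ μ1 μ2 (fun v => (hμ1.1 v).1) q ?_ ?_ ?_ ?_
      · intro v hv hsv
        exact hv ((Stmt3Aux.inSourceComp_cond_iff H v).2 hsv)
      · intro v hv hsv
        exact hv ((Stmt3Aux.inSourceComp_cond_iff H v).1 hsv)
      · rintro e ⟨⟨s, hs, rfl⟩, hne⟩
        have hmem : (H.cond.reachSet (q s) \ {X | H.cond.InSourceComp X}) ∈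
            H.cond.contour.edges :=
          ⟨⟨q s, (Stmt3Aux.inSourceComp_cond_iff H s).2 hs, rfl⟩, by
            rw [← Stmt3Aux.image_contour_edge H s]; exact hne.image _⟩
        refine ⟨_, hmem, ?_⟩
        rw [← Stmt3Aux.image_contour_edge H s]
        exact Set.subset_preimage_image _ _
      · exact fun B => Stmt3Aux.sum_fiber q μ1 B
    exact hmw.trans (le_csSup (Stmt3Aux.aw_set_bddAbove _) ⟨μ2, hfi2, rfl⟩)
  · refine csSup_le (Stmt3Aux.aw_set_nonempty _) ?_
    rintro w ⟨μ2, hμ2, rfl⟩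
    set μ1 : V → ℝ :=
      fun v => Set.indicator {u : V | Quotient.out (q u) = u} (fun u => μ2 (q u)) v with hμ1def
    have h1 : ∀ v, Quotient.out (q v) = v → μ1 v = μ2 (q v) := by
      intro v hv
      rw [hμ1def]
      exact Set.indicator_of_mem (show v ∈ {u : V | Quotient.out (q u) = u} from hv) _
    have h2 : ∀ v, Quotient.out (q v) ≠ v → μ1 v = 0 := by
      intro v hv
      rw [hμ1def]
      exact Set.indicator_of_notMem (show v ∉ {u : V | Quotient.out (q u) = u} from hv) _
    have hnn1 : ∀ v, 0 ≤ μ1 v := by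
      intro v
      by_cases hv : Quotient.out (q v) = v
      · rw [h1 v hv]; exact (hμ2.1 _).1
      · rw [h2 v hv]
    have hub1 : ∀ v, μ1 v ≤ 1 := by
      intro v
      by_cases hv : Quotient.out (q v) = v
      · rw [h1 v hv]; exact (hμ2.1 _).2
      · rw [h2 v hv]; exact zero_le_one
    have hout_eq : ∀ X : Quotient H.sccSetoid, q (Quotient.out X) = X := by
      intro X
      rw [hq]
      exact Quotient.out_eq X
    have hfi1 : H.contour.IsFracIndep μ1 := by
      refine ⟨fun v => ⟨hnn1 v, hub1 v⟩, ?_, ?_⟩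
      · intro v hv
        by_cases hv' : Quotient.out (q v) = v
        · rw [h1 v hv']
          apply hμ2.2.1
          have hsrc : H.InSourceComp v := not_not.1 hv
          exact fun hmem => hmem ((Stmt3Aux.inSourceComp_cond_iff H v).2 hsrc)
        · exact h2 v hv'
      · rintro e ⟨⟨s, hs, rfl⟩, hne⟩
        have hout2 : (Quotient.out ⁻¹' (H.reachSet s \ {v | H.InSourceComp v}) :
            Set (Quotient H.sccSetoid)) =
            H.cond.reachSet (q s) \ {X | H.cond.InSourceComp X} :=
          Stmt3Aux.out_contour_edge H s
        rw [Stmt3Aux.sum_rep q Quotient.out hout_eq μ1 μ2 h1 h2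
          (H.reachSet s \ {v | H.InSourceComp v}), hout2]
        apply hμ2.2.2
        exact ⟨⟨q s, (Stmt3Aux.inSourceComp_cond_iff H s).2 hs, rfl⟩, by
          rw [← Stmt3Aux.image_contour_edge H s]; exact hne.image _⟩
    have hmw : H.cond.contour.muWidth μ2 ≤ H.contour.muWidth μ1 := by
      refine Stmt3Aux.muWidth_le_general _ _ μ2 μ1 (fun X => (hμ2.1 X).1) Quotient.out
        ?_ ?_ ?_ ?_
      · intro X hX hsX
        refine hX ((Stmt3Aux.inSourceComp_cond_iff H _).1 ?_)
        rw [← hq, hout_eq]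
        exact hsX
      · intro X hX hsX
        have := (Stmt3Aux.inSourceComp_cond_iff H _).2 hsX
        rw [← hq, hout_eq] at this
        exact hX this
      · rintro e ⟨⟨S, hS, rfl⟩, hne⟩
        obtain ⟨s0, rfl⟩ := Quotient.exists_rep S
        have hs : H.InSourceComp s0 := (Stmt3Aux.inSourceComp_cond_iff H s0).1 hS
        have himg : q '' (H.reachSet s0 \ {v | H.InSourceComp v}) =
            H.cond.reachSet (q s0) \ {X | H.cond.InSourceComp X} :=
          Stmt3Aux.image_contour_edge H s0
        have he1ne : (H.reachSet s0 \ {v | H.InSourceComp v}).Nonempty :=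
          Set.Nonempty.of_image (himg.symm ▸ hne)
        refine ⟨_, ⟨⟨s0, hs, rfl⟩, he1ne⟩, ?_⟩
        rw [Stmt3Aux.out_contour_edge H s0]
      · exact fun B => (Stmt3Aux.sum_rep q Quotient.out hout_eq μ1 μ2 h1 h2 B).symm
    exact hmw.trans (le_csSup (Stmt3Aux.aw_set_bddAbove _) ⟨μ1, hfi1, rfl⟩)

end
end

section
/- If H_1 and H_2 are finite digraphs such that #Hom(H_1 → G) = #Hom(H_2 → G) for every finite digraph G, then H_1 and H_2 are isomorphic. -/
noncomputable section

section LovaszAux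

open Function Set

/-- The type of subdigraphs of `G`: a vertex set together with an arc relation
supported on it and contained in `G`'s arcs. -/
def SubDG {W : Type} (G : Digraph W) : Type :=
  {p : Set W × (W → W → Prop) // ∀ a b, p.2 a b → a ∈ p.1 ∧ b ∈ p.1 ∧ G.Adj a b}

instance {W : Type} [Finite W] (G : Digraph W) : Finite (SubDG G) := by
  classical
  unfold SubDG
  infer_instance

noncomputable instance {W : Type} [Finite W] (G : Digraph W) : Fintype (SubDG G) :=
  Fintype.ofFinite _

/-- The digraph associated to a subdigraph datum. -/
def SubDG.dg {W : Type} {G : Digraph W} (p : SubDG G) : Digraph p.1.1 where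
  Adj a b := p.1.2 a.1 b.1

/-- A quotient-onto homomorphism: vertex-surjective and arc-surjective. -/
def QuotOnto {V W : Type} (H : Digraph V) (G : Digraph W) (φ : V → W) : Prop :=
  H.IsHom G φ ∧ Surjective φ ∧
    ∀ a b, G.Adj a b → ∃ u v, H.Adj u v ∧ φ u = a ∧ φ v = b

/-- The number of quotient-onto homomorphisms. -/
noncomputable def quotCount {V W : Type} (H : Digraph V) (G : Digraph W) : ℕ :=
  Nat.card {φ : V → W // QuotOnto H G φ}

/-- The subdigraph image of a homomorphism. -/
def projSub {V W : Type} (H : Digraph V) (G : Digraph W)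
    (x : {φ : V → W // H.IsHom G φ}) : SubDG G :=
  ⟨(range x.1, fun a b => ∃ u v, H.Adj u v ∧ x.1 u = a ∧ x.1 v = b), by
    rintro a b ⟨u, v, huv, rfl, rfl⟩
    exact ⟨mem_range_self u, mem_range_self v, x.2 huv⟩⟩

/-- The top subdigraph. -/
def topSub {W : Type} (G : Digraph W) : SubDG G :=
  ⟨(univ, fun a b => G.Adj a b), fun a b hab => ⟨mem_univ a, mem_univ b, hab⟩⟩

lemma fiber_card {V W : Type} (H : Digraph V) (G : Digraph W) (p : SubDG G) :
    Nat.card {x : {φ : V → W // H.IsHom G φ} // projSub H G x = p} =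
      quotCount H p.dg := by
  apply Nat.card_congr
  refine ⟨fun x => ⟨fun v => ⟨x.1.1 v, ?_⟩, ?_, ?_, ?_⟩,
    fun ψ => ⟨⟨fun v => (ψ.1 v).1, ?_⟩, ?_⟩, ?_, ?_⟩
  · have hS : Set.range x.1.1 = p.1.1 := congrArg (fun q => q.1.1) x.2
    rw [← hS]; exact ⟨v, rfl⟩
  · -- IsHom
    intro u v huv
    have hE : (fun a b => ∃ u v, H.Adj u v ∧ x.1.1 u = a ∧ x.1.1 v = b) = p.1.2 :=
      congrArg (fun q => q.1.2) x.2
    show p.1.2 (x.1.1 u) (x.1.1 v)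
    rw [← hE]
    exact ⟨u, v, huv, rfl, rfl⟩
  · -- Surjective
    intro b
    have hb : b.1 ∈ (projSub H G x).1.1 := by rw [x.2]; exact b.2
    obtain ⟨v, hv⟩ := hb
    exact ⟨v, Subtype.ext hv⟩
  · -- arc onto
    intro a b hab
    have hab' : (projSub H G x).1.2 a.1 b.1 := by rw [x.2]; exact hab
    obtain ⟨u, v, huv, hu, hv⟩ := hab'
    exact ⟨u, v, huv, Subtype.ext hu, Subtype.ext hv⟩
  · -- invFun: IsHom
    intro u v huv
    exact (p.2 _ _ (ψ.2.1 huv)).2.2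
  · -- invFun: projSub = p
    obtain ⟨ψ, hψ⟩ := ψ
    apply Subtype.ext
    have hS : range (fun v => (ψ v).1) = p.1.1 := by
      ext a
      constructor
      · rintro ⟨v, rfl⟩; exact (ψ v).2
      · intro ha
        obtain ⟨v, hv⟩ := hψ.2.1 ⟨a, ha⟩
        exact ⟨v, congrArg Subtype.val hv⟩
    have hE : (fun a b => ∃ u v, H.Adj u v ∧ (ψ u).1 = a ∧ (ψ v).1 = b) = p.1.2 := by
      funext a b
      apply propext
      constructor
      · rintro ⟨u, v, huv, rfl, rfl⟩
        exact hψ.1 huv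
      · intro hab
        have : p.dg.Adj ⟨a, (p.2 a b hab).1⟩ ⟨b, (p.2 a b hab).2.1⟩ := hab
        obtain ⟨u, v, huv, hu, hv⟩ := hψ.2.2 _ _ this
        exact ⟨u, v, huv, congrArg Subtype.val hu, congrArg Subtype.val hv⟩
    show (range (fun v => (ψ v).1), fun a b => ∃ u v, H.Adj u v ∧ (ψ u).1 = a ∧ (ψ v).1 = b)
      = p.1
    rw [hS, hE]
  · intro x
    exact Subtype.ext (Subtype.ext rfl)
  · intro ψ
    exact Subtype.ext (funext fun v => Subtype.ext rfl)

lemma hom_decomp {V W : Type} [Fintype V] [Fintype W] (H : Digraph V) (G : Digraph W) :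
    homCount H G = ∑ p : SubDG G, quotCount H p.dg := by
  classical
  haveI : ∀ p : SubDG G, Fintype {x : {φ : V → W // H.IsHom G φ} // projSub H G x = p} :=
    fun p => Fintype.ofFinite _
  haveI : Fintype {φ : V → W // H.IsHom G φ} := Fintype.ofFinite _
  rw [homCount, ← Nat.card_congr (Equiv.sigmaFiberEquiv (projSub H G)),
    Nat.card_eq_fintype_card, Fintype.card_sigma]
  refine Finset.sum_congr rfl fun p _ => ?_
  rw [← fiber_card H G p, Nat.card_eq_fintype_card]

/-- The size measure of a digraph: number of vertices plus number of arcs. -/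
def mes {W : Type} (G : Digraph W) : ℕ :=
  Nat.card W + {x : W × W | G.Adj x.1 x.2}.ncard

lemma mes_dg {W : Type} (G : Digraph W) (p : SubDG G) :
    mes p.dg = p.1.1.ncard + {x : W × W | p.1.2 x.1 x.2}.ncard := by
  have h1 : Nat.card p.1.1 = p.1.1.ncard := Nat.card_coe_set_eq _
  have h2 : {x : p.1.1 × p.1.1 | p.dg.Adj x.1 x.2}.ncard
      = {x : W × W | p.1.2 x.1 x.2}.ncard := by
    rw [← Nat.card_coe_set_eq, ← Nat.card_coe_set_eq]
    apply Nat.card_congr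
    exact ⟨fun z => ⟨(z.1.1.1, z.1.2.1), z.2⟩,
      fun z => ⟨(⟨z.1.1, (p.2 _ _ z.2).1⟩, ⟨z.1.2, (p.2 _ _ z.2).2.1⟩), z.2⟩,
      fun z => rfl, fun z => rfl⟩
  rw [mes, h1, h2]

lemma mes_lt {W : Type} [Finite W] (G : Digraph W) (p : SubDG G) (hp : p ≠ topSub G) :
    mes p.dg < mes G := by
  rw [mes_dg, mes]
  have hSsub : p.1.1 ⊆ univ := subset_univ _
  have hEsub : {x : W × W | p.1.2 x.1 x.2} ⊆ {x : W × W | G.Adj x.1 x.2} :=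
    fun x hx => (p.2 _ _ hx).2.2
  have hne : p.1.1 ≠ univ ∨ {x : W × W | p.1.2 x.1 x.2} ≠ {x : W × W | G.Adj x.1 x.2} := by
    by_contra hc
    push_neg at hc
    apply hp
    apply Subtype.ext
    have hE : p.1.2 = fun a b => G.Adj a b := by
      funext a b
      apply propext
      constructor
      · intro hab; exact (p.2 _ _ hab).2.2
      · intro hab
        have : (a, b) ∈ {x : W × W | p.1.2 x.1 x.2} := by rw [hc.2]; exact hab
        exact this
    show p.1 = (univ, fun a b => G.Adj a b)
    rw [← hc.1, ← hE]
  rw [← Set.ncard_univ W]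
  rcases hne with hne | hne
  · exact Nat.add_lt_add_of_lt_of_le
      (Set.ncard_lt_ncard (ssubset_of_ne_of_subset hne hSsub) (toFinite _))
      (Set.ncard_le_ncard hEsub (toFinite _))
  · exact Nat.add_lt_add_of_le_of_lt
      (Set.ncard_le_ncard hSsub (toFinite _))
      (Set.ncard_lt_ncard (ssubset_of_ne_of_subset hne hEsub) (toFinite _))

lemma quot_top {V W : Type} (H : Digraph V) (G : Digraph W) :
    quotCount H (topSub G).dg = quotCount H G := by
  apply Nat.card_congr
  refine ⟨fun ψ => ⟨fun v => (ψ.1 v).1, ?_, ?_, ?_⟩,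
    fun φ => ⟨fun v => ⟨φ.1 v, mem_univ _⟩, ?_, ?_, ?_⟩, ?_, ?_⟩
  · intro u v huv; exact ψ.2.1 huv
  · intro b
    obtain ⟨v, hv⟩ := ψ.2.2.1 ⟨b, mem_univ b⟩
    exact ⟨v, congrArg Subtype.val hv⟩
  · intro a b hab
    obtain ⟨u, v, huv, hu, hv⟩ := ψ.2.2.2 ⟨a, mem_univ a⟩ ⟨b, mem_univ b⟩ hab
    exact ⟨u, v, huv, congrArg Subtype.val hu, congrArg Subtype.val hv⟩
  · intro u v huv; exact φ.2.1 huv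
  · intro b
    obtain ⟨v, hv⟩ := φ.2.2.1 b.1
    exact ⟨v, Subtype.ext hv⟩
  · intro a b hab
    obtain ⟨u, v, huv, hu, hv⟩ := φ.2.2.2 a.1 b.1 hab
    exact ⟨u, v, huv, Subtype.ext hu, Subtype.ext hv⟩
  · intro ψ; exact Subtype.ext (funext fun v => Subtype.ext rfl)
  · intro φ; exact Subtype.ext rfl

lemma key_lemma {V₁ V₂ : Type} [Fintype V₁] [Fintype V₂]
    (H₁ : Digraph V₁) (H₂ : Digraph V₂)
    (h : ∀ (W : Type) [Fintype W] (G : Digraph W), homCount H₁ G = homCount H₂ G)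
    (N : ℕ) : ∀ (W : Type) [Fintype W] (G : Digraph W), mes G ≤ N →
      quotCount H₁ G = quotCount H₂ G := by
  induction N with
  | zero =>
    intro W _ G hG
    have hW : IsEmpty W := by
      have : Nat.card W = 0 := by unfold mes at hG; omega
      rw [Nat.card_eq_fintype_card] at this
      exact Fintype.card_eq_zero_iff.mp this
    have e : ∀ {V : Type} (H : Digraph V), quotCount H G = homCount H G := by
      intro V H
      apply Nat.card_congr
      apply Equiv.subtypeEquivRight
      intro φ
      constructor
      · exact fun hq => hq.1
      · intro hq
        exact ⟨hq, fun b => (hW.false b).elim, fun a b hab => (hW.false a).elim⟩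
    rw [e H₁, e H₂, h W G]
  | succ N ih =>
    intro W _ G hG
    classical
    have hsum : ∑ p : SubDG G, quotCount H₁ p.dg = ∑ p : SubDG G, quotCount H₂ p.dg := by
      rw [← hom_decomp H₁ G, ← hom_decomp H₂ G, h W G]
    rw [← Finset.sum_erase_add _ _ (Finset.mem_univ (topSub G)),
      ← Finset.sum_erase_add _ _ (Finset.mem_univ (topSub G))] at hsum
    have herase : ∑ p ∈ Finset.univ.erase (topSub G), quotCount H₁ p.dg
        = ∑ p ∈ Finset.univ.erase (topSub G), quotCount H₂ p.dg := by
      refine Finset.sum_congr rfl fun p hp => ?_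
      have hpne : p ≠ topSub G := (Finset.mem_erase.mp hp).1
      exact ih p.1.1 p.dg (by have := mes_lt G p hpne; omega)
    rw [herase] at hsum
    have hcanc := Nat.add_left_cancel hsum
    rw [quot_top, quot_top] at hcanc
    exact hcanc

end LovaszAux

theorem stmt5 {V₁ V₂ : Type} [Fintype V₁] [Fintype V₂]
    (H₁ : Digraph V₁) (H₂ : Digraph V₂)
    (h : ∀ (W : Type) [Fintype W] (G : Digraph W), homCount H₁ G = homCount H₂ G) :
    DigraphIso H₁ H₂ := by
  have key := key_lemma H₁ H₂ h
  have hid : ∀ {V : Type} [Fintype V] (H : Digraph V), 0 < quotCount H H := by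
    intro V _ H
    have : Nonempty {φ : V → V // QuotOnto H H φ} :=
      ⟨⟨id, fun u v huv => huv, Function.surjective_id,
        fun a b hab => ⟨a, b, hab, rfl, rfl⟩⟩⟩
    exact Nat.card_pos
  have h21 : 0 < quotCount H₂ H₁ := by
    rw [← key (mes H₁) V₁ H₁ le_rfl]; exact hid H₁
  have h12 : 0 < quotCount H₁ H₂ := by
    rw [key (mes H₂) V₂ H₂ le_rfl]; exact hid H₂
  obtain ⟨⟨φ, hφ⟩⟩ := (Nat.card_ne_zero.mp h12.ne').1
  obtain ⟨⟨ψ, hψ⟩⟩ := (Nat.card_ne_zero.mp h21.ne').1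
  have hc : Fintype.card V₁ = Fintype.card V₂ :=
    le_antisymm (Fintype.card_le_of_surjective ψ hψ.2.1)
      (Fintype.card_le_of_surjective φ hφ.2.1)
  have hbij : Function.Bijective φ :=
    (Fintype.bijective_iff_surjective_and_card φ).mpr ⟨hφ.2.1, hc⟩
  refine ⟨Equiv.ofBijective φ hbij, fun u v => ⟨fun huv => hφ.1 huv, fun huv => ?_⟩⟩
  obtain ⟨a, b, hab, ha, hb⟩ := hφ.2.2 _ _ huv
  have ha' : a = u := hbij.1 ha
  have hb' : b = v := hbij.1 hb
  subst ha' hb'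
  exact hab

end
end

section
/- For every digraph H there exist n ∈ ℕ, pairwise non-isomorphic digraphs F_1,…,F_n, and nonzero rational numbers a_1,…,a_n such that for every digraph G, #Sub(H→G) = Σ_{i=1}^n a_i · #Hom(F_i→G); moreover, every F_i is a quotient of H, and every quotient of H is isomorphic to some F_i. -/
noncomputable section

namespace S6

open Digraph

instance setoidFinite {V : Type} [Finite V] : Finite (Setoid V) :=
  Finite.of_injective (fun s : Setoid V => (⇑s : V → V → Prop))
    (fun s t h => Setoid.ext fun a b => by rw [show (⇑s : V → V → Prop) = ⇑t from h])

/-- The number of injective homomorphisms. -/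
def injCount {A B : Type} (K : Digraph A) (G : Digraph B) : ℕ :=
  Nat.card {ψ : A → B // K.IsHom G ψ ∧ Function.Injective ψ}

theorem DigraphIso.refl {A : Type} (K : Digraph A) : DigraphIso K K :=
  ⟨Equiv.refl A, fun _ _ => Iff.rfl⟩

theorem DigraphIso.symm {A B : Type} {K : Digraph A} {L : Digraph B}
    (h : DigraphIso K L) : DigraphIso L K := by
  obtain ⟨e, he⟩ := h
  exact ⟨e.symm, fun u v => by rw [he (e.symm u) (e.symm v)]; simp⟩

theorem DigraphIso.trans {A B C : Type} {K : Digraph A} {L : Digraph B} {M : Digraph C}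
    (h : DigraphIso K L) (h' : DigraphIso L M) : DigraphIso K M := by
  obtain ⟨e, he⟩ := h; obtain ⟨f, hf⟩ := h'
  exact ⟨e.trans f, fun u v => by rw [he, hf]; rfl⟩

/-- Vertex equivalence underlying an iso. -/
theorem homCount_congr {A A' B : Type} {K : Digraph A} {K' : Digraph A'}
    (h : DigraphIso K K') (G : Digraph B) : homCount K G = homCount K' G := by
  obtain ⟨e, he⟩ := h
  apply Nat.card_congr
  refine ⟨fun φ => ⟨φ.1 ∘ e.symm, ?_⟩, fun ψ => ⟨ψ.1 ∘ e, ?_⟩, ?_, ?_⟩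
  · intro u v huv
    exact φ.2 (by rw [he]; simpa using huv)
  · intro u v huv
    exact ψ.2 ((he u v).mp huv)
  · intro φ; ext a; simp
  · intro ψ; ext a; simp

theorem injCount_congr {A A' B : Type} {K : Digraph A} {K' : Digraph A'}
    (h : DigraphIso K K') (G : Digraph B) : injCount K G = injCount K' G := by
  obtain ⟨e, he⟩ := h
  apply Nat.card_congr
  refine ⟨fun φ => ⟨φ.1 ∘ e.symm, ?_, φ.2.2.comp e.symm.injective⟩,
    fun ψ => ⟨ψ.1 ∘ e, ?_, ψ.2.2.comp e.injective⟩, ?_, ?_⟩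
  · intro u v huv
    exact φ.2.1 (by rw [he]; simpa using huv)
  · intro u v huv
    exact ψ.2.1 ((he u v).mp huv)
  · intro φ; ext a; simp
  · intro ψ; ext a; simp

theorem nat_card_sigma {ι : Type} [Fintype ι] (f : ι → Type) [∀ i, Finite (f i)] :
    Nat.card (Σ i, f i) = ∑ i, Nat.card (f i) := by
  letI : ∀ i, Fintype (f i) := fun i => Fintype.ofFinite _
  simp [Nat.card_eq_fintype_card]


open scoped Classical

noncomputable instance fintypeSetoid {A : Type} [Finite A] : Fintype (Setoid A) :=
  Fintype.ofFinite _

theorem homCount_eq_sum_injCount {A B : Type} [Finite A] (K : Digraph A) (G : Digraph B)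
    [Finite B] :
    homCount K G = ∑ σ : Setoid A, injCount (K.quot σ) G := by
  have e1 : {φ : A → B // K.IsHom G φ} ≃
      Σ σ : Setoid A, {φ : {φ : A → B // K.IsHom G φ} // Setoid.ker φ.1 = σ} :=
    (Equiv.sigmaFiberEquiv (fun φ : {φ : A → B // K.IsHom G φ} => Setoid.ker φ.1)).symm
  have e2 : ∀ σ : Setoid A, {φ : {φ : A → B // K.IsHom G φ} // Setoid.ker φ.1 = σ} ≃
      {ψ : Quotient σ → B // (K.quot σ).IsHom G ψ ∧ Function.Injective ψ} := by
    intro σ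
    refine ⟨fun p => ⟨Quotient.lift p.1.1 (fun a b hab => ?_), ?_, ?_⟩,
      fun q => ⟨⟨q.1 ∘ Quotient.mk σ, ?_⟩, ?_⟩, ?_, ?_⟩
    · have : Setoid.ker p.1.1 a b := by rw [p.2]; exact hab
      exact this
    · rintro X Y ⟨a, b, rfl, rfl, hab⟩
      exact p.1.2 hab
    · intro X Y
      induction X using Quotient.ind
      induction Y using Quotient.ind
      intro h
      refine Quotient.sound ?_
      rw [← p.2]
      exact h
    · intro a b hab
      exact q.2.1 ⟨a, b, rfl, rfl, hab⟩
    · refine Setoid.ext fun a b => ?_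
      change q.1 ⟦a⟧ = q.1 ⟦b⟧ ↔ σ a b
      constructor
      · intro h; exact Quotient.eq''.mp (q.2.2 h)
      · intro h; rw [Quotient.sound h]
    · intro p
      refine Subtype.ext (Subtype.ext ?_)
      rfl
    · intro q
      refine Subtype.ext ?_
      funext X
      induction X using Quotient.ind
      rfl
  calc homCount K G = Nat.card (Σ σ : Setoid A,
        {φ : {φ : A → B // K.IsHom G φ} // Setoid.ker φ.1 = σ}) := Nat.card_congr e1
    _ = ∑ σ : Setoid A, injCount (K.quot σ) G := by
        rw [nat_card_sigma]
        exact Finset.sum_congr rfl fun σ _ => Nat.card_congr (e2 σ)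


/-- The setoid on `Quotient σ` induced by a coarser setoid `τ ≥ σ`. -/
def corr {V : Type} (σ τ : Setoid V) (h : σ ≤ τ) : Setoid (Quotient σ) where
  r := Quotient.lift₂ (fun a b => τ a b)
    (fun a b a' b' ha hb => propext
      ⟨fun hab => τ.iseqv.trans (τ.iseqv.trans (τ.iseqv.symm (h ha)) hab) (h hb),
       fun hab => τ.iseqv.trans (τ.iseqv.trans (h ha) hab) (τ.iseqv.symm (h hb))⟩)
  iseqv := by
    constructor
    · intro X; induction X using Quotient.ind; exact τ.refl _
    · intro X Y; induction X using Quotient.ind; induction Y using Quotient.ind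
      exact fun hh => τ.symm hh
    · intro X Y Z
      induction X using Quotient.ind; induction Y using Quotient.ind
      induction Z using Quotient.ind
      exact fun h1 h2 => τ.trans h1 h2

theorem corr_mk {V : Type} (σ τ : Setoid V) (h : σ ≤ τ) (a b : V) :
    corr σ τ h (Quotient.mk σ a) (Quotient.mk σ b) ↔ τ a b := Iff.rfl

theorem quot_quot_iso {V : Type} (H : Digraph V) (σ τ : Setoid V) (h : σ ≤ τ) :
    DigraphIso (H.quot τ) ((H.quot σ).quot (corr σ τ h)) := by
  refine ⟨⟨Quotient.lift (fun a => Quotient.mk (corr σ τ h) (Quotient.mk σ a))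
      (fun a b hab => Quotient.sound ((corr_mk σ τ h a b).mpr hab)),
    Quotient.lift (Quotient.lift (fun a => Quotient.mk τ a) (fun a b hab => Quotient.sound (h hab)))
      (fun X Y => ?_), ?_, ?_⟩, ?_⟩
  · induction X using Quotient.ind; induction Y using Quotient.ind
    exact fun hXY => Quotient.sound hXY
  · intro X; induction X using Quotient.ind; rfl
  · intro X; induction X using Quotient.ind with | _ X => ?_
    induction X using Quotient.ind; rfl
  · intro X Y
    induction X using Quotient.ind with | _ x => ?_
    induction Y using Quotient.ind with | _ y => ?_
    constructor
    · rintro ⟨a, b, ha, hb, hab⟩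
      refine ⟨Quotient.mk σ a, Quotient.mk σ b, Quotient.sound ?_, Quotient.sound ?_,
        a, b, rfl, rfl, hab⟩
      · exact (Quotient.exact ha : τ a x)
      · exact (Quotient.exact hb : τ b y)
    · rintro ⟨A, B, hA, hB, a, b, rfl, rfl, hab⟩
      refine ⟨a, b, Quotient.sound (?_ : τ a x), Quotient.sound (?_ : τ b y), hab⟩
      · have hA' : Quotient.mk (corr σ τ h) (Quotient.mk σ a) =
            Quotient.mk (corr σ τ h) (Quotient.mk σ x) := hA
        have h2 : corr σ τ h (Quotient.mk σ a) (Quotient.mk σ x) := Quotient.exact hA'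
        exact h2
      · have hB' : Quotient.mk (corr σ τ h) (Quotient.mk σ b) =
            Quotient.mk (corr σ τ h) (Quotient.mk σ y) := hB
        have h2 : corr σ τ h (Quotient.mk σ b) (Quotient.mk σ y) := Quotient.exact hB'
        exact h2

/-- Setoids above `σ` correspond to setoids on the quotient. -/
def corrEquiv {V : Type} (σ : Setoid V) : {τ : Setoid V // σ ≤ τ} ≃ Setoid (Quotient σ) where
  toFun t := corr σ t.1 t.2
  invFun ρ := ⟨Setoid.comap (Quotient.mk σ) ρ,
    fun a b hab => by
      change ρ _ _
      rw [Quotient.sound hab]⟩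
  left_inv t := by
    refine Subtype.ext (Setoid.ext fun a b => Iff.rfl)
  right_inv ρ := by
    refine Setoid.ext fun X Y => ?_
    induction X using Quotient.ind with | _ x => ?_
    induction Y using Quotient.ind with | _ y => ?_
    exact Iff.rfl

theorem homCount_quot_eq_sum {V W : Type} [Finite V] [Finite W] (H : Digraph V)
    (G : Digraph W) (σ : Setoid V) :
    homCount (H.quot σ) G = ∑ τ : Setoid V, if σ ≤ τ then injCount (H.quot τ) G else 0 := by
  rw [homCount_eq_sum_injCount]
  rw [← Equiv.sum_comp (corrEquiv σ) (fun ρ => injCount ((H.quot σ).quot ρ) G)]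
  have : ∀ t : {τ : Setoid V // σ ≤ τ},
      injCount ((H.quot σ).quot (corrEquiv σ t)) G = injCount (H.quot t.1) G :=
    fun t => (injCount_congr (quot_quot_iso H σ t.1 t.2) G).symm
  rw [Finset.sum_congr rfl (fun t _ => this t), ← Finset.sum_filter]
  exact (Finset.sum_subtype (Finset.univ.filter fun τ => σ ≤ τ) (p := fun τ => σ ≤ τ)
    (fun x => by simp) (fun τ => injCount (H.quot τ) G)).symm


noncomputable def nuF {V : Type} [Finite V] :
    ∀ σ : Setoid V, (∀ ρ : Setoid V, ρ < σ → ℚ) → ℚ :=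
  fun σ rec => (if σ = ⊥ then 1 else 0) -
    ∑ ρ ∈ (Finset.univ.filter (fun ρ => ρ < σ)).attach, rec ρ.1 (Finset.mem_filter.mp ρ.2).2

/-- The Möbius function of the partition lattice (relative to `⊥`). -/
noncomputable def nu {V : Type} [Finite V] : Setoid V → ℚ :=
  WellFounded.fix wellFounded_lt nuF

theorem nu_def {V : Type} [Finite V] (σ : Setoid V) :
    nu σ = (if σ = ⊥ then 1 else 0) - ∑ ρ ∈ Finset.univ.filter (fun ρ => ρ < σ), nu ρ := by
  have h := WellFounded.fix_eq (wellFounded_lt (α := Setoid V)) nuF σ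
  rw [show nu σ = _ from h]
  unfold nuF
  rw [← Finset.sum_attach (Finset.univ.filter (fun ρ => ρ < σ)) (fun ρ => nu ρ)]
  rfl

theorem filter_le_eq {V : Type} [Finite V] (σ : Setoid V) :
    Finset.univ.filter (fun ρ => ρ ≤ σ) = insert σ (Finset.univ.filter (fun ρ => ρ < σ)) := by
  ext ρ
  simp only [Finset.mem_filter, Finset.mem_insert, Finset.mem_univ, true_and]
  rw [le_iff_lt_or_eq]
  tauto

theorem nu_sum {V : Type} [Finite V] (σ : Setoid V) :
    ∑ ρ : Setoid V, (if ρ ≤ σ then nu ρ else 0) = if σ = ⊥ then 1 else 0 := by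
  rw [← Finset.sum_filter, filter_le_eq, Finset.sum_insert (by simp), nu_def]
  ring

noncomputable def mtopF {V : Type} [Finite V] (τ : Setoid V) :
    ∀ ρ : Setoid V, (∀ y : Setoid V, y > ρ → ℚ) → ℚ :=
  fun ρ rec => (if ρ = τ then 1 else 0) -
    ∑ y ∈ (Finset.univ.filter (fun y => ρ < y ∧ y ≤ τ)).attach,
      rec y.1 (Finset.mem_filter.mp y.2).2.1

/-- The Möbius function of the partition lattice relative to a top element `τ`. -/
noncomputable def mtop {V : Type} [Finite V] (τ : Setoid V) : Setoid V → ℚ :=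
  WellFounded.fix wellFounded_gt (mtopF τ)

theorem mtop_def {V : Type} [Finite V] (τ ρ : Setoid V) :
    mtop τ ρ = (if ρ = τ then 1 else 0) -
      ∑ y ∈ Finset.univ.filter (fun y => ρ < y ∧ y ≤ τ), mtop τ y := by
  have h := WellFounded.fix_eq (wellFounded_gt (α := Setoid V)) (mtopF τ) ρ
  rw [show mtop τ ρ = _ from h]
  unfold mtopF
  rw [← Finset.sum_attach (Finset.univ.filter (fun y => ρ < y ∧ y ≤ τ)) (fun y => mtop τ y)]
  rfl

theorem mtop_sum {V : Type} [Finite V] (τ c : Setoid V) :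
    ∑ y : Setoid V, (if c ≤ y ∧ y ≤ τ then mtop τ y else 0) = if c = τ then 1 else 0 := by
  by_cases hc : c ≤ τ
  · rw [← Finset.sum_filter]
    have hins : Finset.univ.filter (fun y => c ≤ y ∧ y ≤ τ) =
        insert c (Finset.univ.filter fun y => c < y ∧ y ≤ τ) := by
      ext y
      simp only [Finset.mem_filter, Finset.mem_insert, Finset.mem_univ, true_and]
      constructor
      · rintro ⟨h1, h2⟩
        rcases lt_or_eq_of_le h1 with h | h
        · exact Or.inr ⟨h, h2⟩
        · exact Or.inl h.symm
      · rintro (rfl | ⟨h1, h2⟩)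
        · exact ⟨le_rfl, hc⟩
        · exact ⟨le_of_lt h1, h2⟩
    rw [hins, Finset.sum_insert (by simp), mtop_def]
    ring
  · rw [Finset.sum_eq_zero, if_neg (fun h => hc (le_of_eq h))]
    intro y _
    rw [if_neg]
    rintro ⟨h1, h2⟩
    exact hc (h1.trans h2)

theorem quot_bot_iso {V : Type} (H : Digraph V) : DigraphIso H (H.quot (⊥ : Setoid V)) := by
  have hbot : ∀ a b : V, (⊥ : Setoid V) a b → a = b := by
    intro a b h; rwa [Setoid.bot_def] at h
  refine ⟨⟨Quotient.mk ⊥, Quotient.lift id (fun a b h => hbot a b h), fun a => rfl, ?_⟩, ?_⟩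
  · intro X; induction X using Quotient.ind; rfl
  · intro u v
    constructor
    · intro h; exact ⟨u, v, rfl, rfl, h⟩
    · rintro ⟨a, b, ha, hb, hab⟩
      have ha' : a = u := hbot a u (Quotient.exact ha)
      have hb' : b = v := hbot b v (Quotient.exact hb)
      rwa [ha', hb'] at hab

theorem inj_eq_sum_nu {V W : Type} [Finite V] [Finite W] (H : Digraph V) (G : Digraph W) :
    (injCount H G : ℚ) = ∑ σ : Setoid V, nu σ * (homCount (H.quot σ) G : ℚ) := by
  have key : ∀ σ : Setoid V, (homCount (H.quot σ) G : ℚ) =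
      ∑ τ : Setoid V, if σ ≤ τ then (injCount (H.quot τ) G : ℚ) else 0 := by
    intro σ
    rw [homCount_quot_eq_sum H G σ]
    push_cast
    exact Finset.sum_congr rfl fun τ _ => by split <;> simp
  symm
  calc (∑ σ : Setoid V, nu σ * (homCount (H.quot σ) G : ℚ))
      = ∑ σ : Setoid V, ∑ τ : Setoid V,
          (if σ ≤ τ then nu σ else 0) * (injCount (H.quot τ) G : ℚ) := by
        refine Finset.sum_congr rfl fun σ _ => ?_
        rw [key σ, Finset.mul_sum]
        exact Finset.sum_congr rfl fun τ _ => by split <;> ring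
    _ = ∑ τ : Setoid V, (∑ σ : Setoid V, if σ ≤ τ then nu σ else 0) *
          (injCount (H.quot τ) G : ℚ) := by
        rw [Finset.sum_comm]
        exact Finset.sum_congr rfl fun τ _ => by rw [Finset.sum_mul]
    _ = ∑ τ : Setoid V, (if τ = ⊥ then 1 else 0) * (injCount (H.quot τ) G : ℚ) := by
        exact Finset.sum_congr rfl fun τ _ => by rw [nu_sum]
    _ = (injCount (H.quot (⊥ : Setoid V)) G : ℚ) := by
        rw [Finset.sum_congr rfl (fun τ _ => by rw [ite_mul, one_mul, zero_mul]),
          Finset.sum_ite_eq' Finset.univ (⊥ : Setoid V)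
            (fun τ => (injCount (H.quot τ) G : ℚ))]
        simp
    _ = (injCount H G : ℚ) := by rw [← injCount_congr (quot_bot_iso H) G]


/-- Explicit description of the join of a setoid with a pair setoid. -/
def pairSup {V : Type} (x : Setoid V) (u v : V) : Setoid V where
  r p q := x p q ∨ (x p u ∧ x v q) ∨ (x p v ∧ x u q)
  iseqv := by
    refine ⟨fun p => Or.inl (x.iseqv.refl p), ?_, ?_⟩
    · rintro p q (h | ⟨h1, h2⟩ | ⟨h1, h2⟩)
      · exact Or.inl (x.iseqv.symm h)
      · exact Or.inr (Or.inr ⟨x.iseqv.symm h2, x.iseqv.symm h1⟩)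
      · exact Or.inr (Or.inl ⟨x.iseqv.symm h2, x.iseqv.symm h1⟩)
    · rintro p q s (h | ⟨h1, h2⟩ | ⟨h1, h2⟩) (h' | ⟨h1', h2'⟩ | ⟨h1', h2'⟩)
      · exact Or.inl (x.iseqv.trans h h')
      · exact Or.inr (Or.inl ⟨x.iseqv.trans h h1', h2'⟩)
      · exact Or.inr (Or.inr ⟨x.iseqv.trans h h1', h2'⟩)
      · exact Or.inr (Or.inl ⟨h1, x.iseqv.trans h2 h'⟩)
      · exact Or.inl (x.iseqv.trans h1
          (x.iseqv.trans (x.iseqv.symm (x.iseqv.trans h2 h1')) h2'))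
      · exact Or.inl (x.iseqv.trans h1 h2')
      · exact Or.inr (Or.inr ⟨h1, x.iseqv.trans h2 h'⟩)
      · exact Or.inl (x.iseqv.trans h1 h2')
      · exact Or.inl (x.iseqv.trans h1
          (x.iseqv.trans (x.iseqv.symm (x.iseqv.trans h2 h1')) h2'))

theorem pairSetoid_le {V : Type} {τ : Setoid V} {u v : V} (h : τ u v) :
    pairSetoid u v ≤ τ := by
  rw [Setoid.le_def]
  intro p q hpq
  rcases hpq with rfl | ⟨hp, hq⟩
  · exact τ.iseqv.refl _
  · simp only [Set.mem_insert_iff, Set.mem_singleton_iff] at hp hq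
    rcases hp with rfl | rfl <;> rcases hq with rfl | rfl
    · exact τ.iseqv.refl _
    · exact h
    · exact τ.iseqv.symm h
    · exact τ.iseqv.refl _

theorem pairSetoid_rel {V : Type} (u v : V) : pairSetoid u v u v :=
  Or.inr ⟨Set.mem_insert _ _, Set.mem_insert_of_mem _ rfl⟩

theorem pairSup_eq {V : Type} (x : Setoid V) (u v : V) :
    x ⊔ pairSetoid u v = pairSup x u v := by
  apply le_antisymm
  · apply sup_le
    · rw [Setoid.le_def]; intro p q h; exact Or.inl h
    · rw [Setoid.le_def]
      intro p q hpq
      rcases hpq with rfl | ⟨hp, hq⟩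
      · exact Or.inl (x.iseqv.refl _)
      · simp only [Set.mem_insert_iff, Set.mem_singleton_iff] at hp hq
        rcases hp with rfl | rfl <;> rcases hq with rfl | rfl
        · exact Or.inl (x.iseqv.refl _)
        · exact Or.inr (Or.inl ⟨x.iseqv.refl _, x.iseqv.refl _⟩)
        · exact Or.inr (Or.inr ⟨x.iseqv.refl _, x.iseqv.refl _⟩)
        · exact Or.inl (x.iseqv.refl _)
  · rw [Setoid.le_def]
    have hx : ∀ p q, x p q → (x ⊔ pairSetoid u v) p q :=
      fun p q h => (le_sup_left : x ≤ x ⊔ pairSetoid u v) h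
    have huv : (x ⊔ pairSetoid u v) u v :=
      (le_sup_right : pairSetoid u v ≤ x ⊔ pairSetoid u v) (pairSetoid_rel u v)
    intro p q hpq
    rcases hpq with h | ⟨h1, h2⟩ | ⟨h1, h2⟩
    · exact hx _ _ h
    · exact (x ⊔ pairSetoid u v).iseqv.trans (hx _ _ h1)
        ((x ⊔ pairSetoid u v).iseqv.trans huv (hx _ _ h2))
    · exact (x ⊔ pairSetoid u v).iseqv.trans (hx _ _ h1)
        ((x ⊔ pairSetoid u v).iseqv.trans ((x ⊔ pairSetoid u v).iseqv.symm huv) (hx _ _ h2))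

theorem sup_pair_iff {V : Type} (x : Setoid V) (u v : V) (p q : V) :
    (x ⊔ pairSetoid u v) p q ↔ (x p q ∨ (x p u ∧ x v q) ∨ (x p v ∧ x u q)) := by
  rw [pairSup_eq x u v]
  rfl

theorem card_quot_le {V : Type} [Finite V] (x : Setoid V) :
    Nat.card (Quotient x) ≤ Nat.card V :=
  Nat.card_le_card_of_surjective (Quotient.mk x) (fun X => ⟨X.out, X.out_eq⟩)

theorem card_quot_pairSup {V : Type} [Finite V] (x : Setoid V) {u v : V} (h : ¬ x u v) :
    Nat.card (Quotient x) = Nat.card (Quotient (x ⊔ pairSetoid u v)) + 1 := by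
  set s := x ⊔ pairSetoid u v with hs
  have hchar : ∀ p q, s p q ↔ (x p q ∨ (x p u ∧ x v q) ∨ (x p v ∧ x u q)) :=
    sup_pair_iff x u v
  have hxs : ∀ p q, x p q → s p q := fun p q hh => (le_sup_left : x ≤ s) hh
  have e : Quotient x ≃ (Quotient s) ⊕ Unit := by
    refine ⟨Quotient.lift
        (fun w => if x w v then Sum.inr Unit.unit else Sum.inl (Quotient.mk s w)) ?_,
      Sum.elim (Quotient.lift
        (fun w => if x w v then Quotient.mk x u else Quotient.mk x w) ?_)
        (fun _ => Quotient.mk x v), ?_, ?_⟩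
    · intro w w' hww'
      by_cases hwv : x w v
      · rw [if_pos hwv, if_pos (x.iseqv.trans (x.iseqv.symm hww') hwv)]
      · rw [if_neg hwv, if_neg (fun hh => hwv (x.iseqv.trans hww' hh))]
        exact congrArg Sum.inl (Quotient.sound (hxs _ _ hww'))
    · intro w w' hww'
      rcases (hchar w w').mp hww' with h1 | ⟨h1, h2⟩ | ⟨h1, h2⟩
      · by_cases hwv : x w v
        · rw [if_pos hwv, if_pos (x.iseqv.trans (x.iseqv.symm h1) hwv)]
        · rw [if_neg hwv, if_neg (fun hh => hwv (x.iseqv.trans h1 hh))]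
          exact Quotient.sound h1
      · rw [if_neg (fun hh => h (x.iseqv.trans (x.iseqv.symm h1) hh)),
          if_pos (x.iseqv.symm h2)]
        exact Quotient.sound h1
      · rw [if_pos h1, if_neg (fun hh => h (x.iseqv.trans h2 hh))]
        exact Quotient.sound h2
    · intro X
      induction X using Quotient.ind with | _ w => ?_
      simp only [Quotient.lift_mk]
      by_cases hwv : x w v
      · rw [if_pos hwv]
        exact Quotient.sound (x.iseqv.symm hwv)
      · rw [if_neg hwv]
        simp only [Sum.elim_inl, Quotient.lift_mk]
        rw [if_neg hwv]
    · intro Y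
      rcases Y with Y | u'
      · induction Y using Quotient.ind with | _ w => ?_
        simp only [Sum.elim_inl, Quotient.lift_mk]
        by_cases hwv : x w v
        · rw [if_pos hwv]
          simp only [Quotient.lift_mk]
          rw [if_neg (fun hh => h hh)]
          exact congrArg Sum.inl (Quotient.sound
            ((hchar u w).mpr (Or.inr (Or.inl ⟨x.iseqv.refl u, x.iseqv.symm hwv⟩))))
        · rw [if_neg hwv]
          simp only [Quotient.lift_mk]
          rw [if_neg hwv]
      · cases u'
        simp only [Sum.elim_inr, Quotient.lift_mk]
        rw [if_pos (x.iseqv.refl v)]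
  rw [Nat.card_congr e, Nat.card_sum]
  simp


theorem weisner {V : Type} [Finite V] (a τ : Setoid V) (ha : a ≤ τ) (ha0 : a ≠ ⊥) :
    ∑ x : Setoid V, (if x ⊔ a = τ then nu x else 0) = 0 := by
  have step1 : ∀ x : Setoid V, (if x ⊔ a = τ then nu x else 0) =
      ∑ y : Setoid V, (if x ≤ y ∧ a ≤ y ∧ y ≤ τ then nu x * mtop τ y else 0) := by
    intro x
    have h1 : ∀ y : Setoid V, (if x ≤ y ∧ a ≤ y ∧ y ≤ τ then nu x * mtop τ y else 0) =
        nu x * (if x ⊔ a ≤ y ∧ y ≤ τ then mtop τ y else 0) := by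
      intro y
      have hiff : (x ≤ y ∧ a ≤ y ∧ y ≤ τ) ↔ (x ⊔ a ≤ y ∧ y ≤ τ) := by
        rw [sup_le_iff, and_assoc]
      rw [if_congr hiff rfl rfl, mul_ite, mul_zero]
    rw [Finset.sum_congr rfl (fun y _ => h1 y), ← Finset.mul_sum, mtop_sum τ (x ⊔ a),
      mul_ite, mul_one, mul_zero]
  rw [Finset.sum_congr rfl (fun x _ => step1 x), Finset.sum_comm]
  rw [Finset.sum_eq_zero]
  intro y _
  by_cases hy : a ≤ y ∧ y ≤ τ
  · have h2 : ∀ x : Setoid V, (if x ≤ y ∧ a ≤ y ∧ y ≤ τ then nu x * mtop τ y else 0) =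
        (if x ≤ y then nu x else 0) * mtop τ y := by
      intro x
      by_cases hxy : x ≤ y
      · rw [if_pos ⟨hxy, hy⟩, if_pos hxy]
      · rw [if_neg (fun hh => hxy hh.1), if_neg hxy, zero_mul]
    rw [Finset.sum_congr rfl (fun x _ => h2 x), ← Finset.sum_mul, nu_sum y, if_neg, zero_mul]
    intro hy0
    exact ha0 (le_bot_iff.mp (hy0 ▸ hy.1))
  · rw [Finset.sum_eq_zero]
    intro x _
    rw [if_neg (fun hh => hy ⟨hh.2.1, hh.2.2⟩)]

theorem card_quot_congr {A B : Type} {K : Digraph A} {L : Digraph B}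
    (h : DigraphIso K L) : Nat.card A = Nat.card B := by
  obtain ⟨e, -⟩ := h
  exact Nat.card_congr e

theorem exists_ne_rel_of_ne_bot {V : Type} {τ : Setoid V} (h : τ ≠ ⊥) :
    ∃ u v : V, u ≠ v ∧ τ u v := by
  by_contra hc
  push_neg at hc
  apply h
  refine Setoid.ext fun p q => ?_
  rw [show ((⊥ : Setoid V) p q) = (p = q) from congrFun (congrFun Setoid.bot_def p) q]
  constructor
  · intro hpq
    by_contra hne
    exact hc p q hne hpq
  · rintro rfl
    exact τ.iseqv.refl p

/-- Split the vertex `v` off from its class. -/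
def splitOff {V : Type} (τ : Setoid V) (v : V) : Setoid V where
  r p q := τ p q ∧ (p = v ↔ q = v)
  iseqv := ⟨fun p => ⟨τ.iseqv.refl p, Iff.rfl⟩,
    fun h => ⟨τ.iseqv.symm h.1, h.2.symm⟩,
    fun h h' => ⟨τ.iseqv.trans h.1 h'.1, h.2.trans h'.2⟩⟩

theorem splitOff_le {V : Type} (τ : Setoid V) (v : V) : splitOff τ v ≤ τ := by
  rw [Setoid.le_def]
  intro p q h
  exact h.1

theorem splitOff_ne {V : Type} (τ : Setoid V) {u v : V} (hne : u ≠ v) (huv : τ u v) :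
    splitOff τ v ≠ τ := by
  intro heq
  have h2 : splitOff τ v u v := by rw [heq]; exact huv
  exact hne (h2.2.mpr rfl)

theorem splitOff_sup {V : Type} (τ : Setoid V) {u v : V} (hne : u ≠ v) (huv : τ u v) :
    splitOff τ v ⊔ pairSetoid u v = τ := by
  apply le_antisymm
  · exact sup_le (splitOff_le τ v) (pairSetoid_le huv)
  · rw [Setoid.le_def]
    intro p q hpq
    refine (sup_pair_iff _ u v p q).mpr ?_
    by_cases hpv : p = v <;> by_cases hqv : q = v
    · exact Or.inl ⟨hpq, by rw [hpv, hqv]⟩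
    · subst hpv
      refine Or.inr (Or.inr ⟨⟨τ.iseqv.refl p, Iff.rfl⟩, ⟨τ.iseqv.trans huv hpq, ?_⟩⟩)
      constructor
      · intro h; exact absurd h hne
      · intro h; exact absurd h hqv
    · subst hqv
      refine Or.inr (Or.inl ⟨⟨τ.iseqv.trans hpq (τ.iseqv.symm huv), ?_⟩,
        ⟨τ.iseqv.refl q, Iff.rfl⟩⟩)
      constructor
      · intro h; exact absurd h hpv
      · intro h; exact absurd h hne
    · exact Or.inl ⟨hpq, ⟨fun h => absurd h hpv, fun h => absurd h hqv⟩⟩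

/-- The sign of the Möbius function `nu`. -/
theorem nu_sign {V : Type} [Finite V] : ∀ τ : Setoid V,
    0 < (-1 : ℚ) ^ (Nat.card V - Nat.card (Quotient τ)) * nu τ := by
  have hwf : WellFounded ((· < ·) : Setoid V → Setoid V → Prop) := wellFounded_lt
  intro τ
  induction τ using hwf.induction with | _ τ IH => ?_
  by_cases hbot : τ = ⊥
  · subst hbot
    have h1 : nu (⊥ : Setoid V) = 1 := by
      rw [nu_def]
      have h0 : Finset.univ.filter (fun ρ : Setoid V => ρ < ⊥) = ∅ := by
        refine Finset.filter_eq_empty_iff.mpr ?_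
        intro ρ _
        exact not_lt_bot
      rw [h0]
      simp
    have h2 : Nat.card (Quotient (⊥ : Setoid V)) = Nat.card V :=
      (card_quot_congr (quot_bot_iso (Digraph.mk (fun _ _ => False)))).symm
    rw [h1, h2, Nat.sub_self]
    norm_num
  · obtain ⟨u, v, hne, huv⟩ := exists_ne_rel_of_ne_bot hbot
    have ha : pairSetoid u v ≤ τ := pairSetoid_le huv
    have ha0 : pairSetoid u v ≠ ⊥ := by
      intro hh
      have h3 : (⊥ : Setoid V) u v := hh ▸ pairSetoid_rel u v
      rw [show ((⊥ : Setoid V) u v) = (u = v) from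
        congrFun (congrFun Setoid.bot_def u) v] at h3
      exact hne h3
    have hW := weisner (pairSetoid u v) τ ha ha0
    set T := Finset.univ.filter (fun x : Setoid V => x ⊔ pairSetoid u v = τ ∧ x ≠ τ) with hT
    have hsplit : nu τ = - ∑ x ∈ T, nu x := by
      have hτT : τ ∉ T := by simp [hT]
      have hins : Finset.univ.filter (fun x : Setoid V => x ⊔ pairSetoid u v = τ) =
          insert τ T := by
        ext x
        simp only [hT, Finset.mem_filter, Finset.mem_insert, Finset.mem_univ, true_and]
        constructor
        · intro hx
          by_cases hxx : x = τ
          · exact Or.inl hxx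
          · exact Or.inr ⟨hx, hxx⟩
        · rintro (rfl | ⟨hx, -⟩)
          · exact sup_eq_left.mpr ha
          · exact hx
      rw [← Finset.sum_filter, hins, Finset.sum_insert hτT] at hW
      linarith
    have key : ∀ x ∈ T,
        0 < (-1 : ℚ) ^ (Nat.card V - Nat.card (Quotient τ)) * (- nu x) := by
      intro x hx
      rw [hT, Finset.mem_filter] at hx
      obtain ⟨-, hx1, hx2⟩ := hx
      have hxle : x ≤ τ := le_sup_left.trans (le_of_eq hx1)
      have hxlt : x < τ := lt_of_le_of_ne hxle hx2
      have hxuv : ¬ x u v := by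
        intro hh
        have h3 : x ⊔ pairSetoid u v = x := sup_eq_left.mpr (pairSetoid_le hh)
        exact hx2 (by rw [← h3, hx1])
      have hcard : Nat.card (Quotient x) = Nat.card (Quotient τ) + 1 := by
        rw [card_quot_pairSup x hxuv, hx1]
      have hle : Nat.card (Quotient x) ≤ Nat.card V := card_quot_le x
      have harith : Nat.card V - Nat.card (Quotient τ) =
          (Nat.card V - Nat.card (Quotient x)) + 1 := by omega
      have hIH := IH x hxlt
      rw [harith, pow_succ]
      nlinarith [hIH]
    have hTne : T.Nonempty := by
      refine ⟨splitOff τ v, ?_⟩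
      rw [hT, Finset.mem_filter]
      exact ⟨Finset.mem_univ _, splitOff_sup τ hne huv, splitOff_ne τ hne huv⟩
    have hrw : ∑ x ∈ T, (-1:ℚ) ^ (Nat.card V - Nat.card (Quotient τ)) * (- nu x)
        = (-1:ℚ) ^ (Nat.card V - Nat.card (Quotient τ)) * (- ∑ x ∈ T, nu x) := by
      rw [← Finset.mul_sum, Finset.sum_neg_distrib]
    rw [hsplit, ← hrw]
    exact Finset.sum_pos key hTne


def autCount {A : Type} (K : Digraph A) : ℕ :=
  Nat.card {e : A ≃ A // ∀ u v, K.Adj u v ↔ K.Adj (e u) (e v)}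

theorem autCount_pos {A : Type} [Finite A] (K : Digraph A) : 0 < autCount K := by
  have : Nonempty {e : A ≃ A // ∀ u v, K.Adj u v ↔ K.Adj (e u) (e v)} :=
    ⟨⟨Equiv.refl A, fun u v => Iff.rfl⟩⟩
  exact Nat.card_pos

theorem injCount_eq_aut_mul_sub {V W : Type} [Finite V] [Finite W]
    (H : Digraph V) (G : Digraph W) :
    injCount H G = autCount H * subCount H G := by
  classical
  set Pred := fun p : Set W × (W → W → Prop) =>
    (∀ a b, p.2 a b → a ∈ p.1 ∧ b ∈ p.1 ∧ G.Adj a b) ∧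
    DigraphIso H (Digraph.mk fun (a b : p.1) => p.2 a b) with hPred
  have hsub : subCount H G = Nat.card {p // Pred p} := rfl
  set F : {ψ : V → W // H.IsHom G ψ ∧ Function.Injective ψ} → Set W × (W → W → Prop) :=
    fun ψ => (Set.range ψ.1, fun a b => ∃ u v, H.Adj u v ∧ ψ.1 u = a ∧ ψ.1 v = b) with hF
  have hFmem : ∀ ψ, Pred (F ψ) := by
    intro ψ
    constructor
    · rintro a b ⟨u, v, huv, rfl, rfl⟩
      exact ⟨⟨u, rfl⟩, ⟨v, rfl⟩, ψ.2.1 huv⟩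
    · refine ⟨Equiv.ofInjective ψ.1 ψ.2.2, fun u v => ?_⟩
      constructor
      · intro h
        exact ⟨u, v, h, rfl, rfl⟩
      · rintro ⟨u', v', h, h1, h2⟩
        have hu : u' = u := ψ.2.2 (h1.trans rfl)
        have hv : v' = v := ψ.2.2 (h2.trans rfl)
        rwa [hu, hv] at h
  set Φ : {ψ : V → W // H.IsHom G ψ ∧ Function.Injective ψ} → {p // Pred p} :=
    fun ψ => ⟨F ψ, hFmem ψ⟩ with hΦ
  have e1 : {ψ : V → W // H.IsHom G ψ ∧ Function.Injective ψ} ≃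
      Σ p : {p // Pred p}, {ψ // Φ ψ = p} := (Equiv.sigmaFiberEquiv Φ).symm
  have hfib : ∀ p : {p // Pred p}, Nat.card {ψ // Φ ψ = p} = autCount H := by
    intro p
    obtain ⟨e₀, he₀⟩ := p.2.2
    set ψ₀ : V → W := fun u => (e₀ u : W) with hψ₀
    have hom₀ : H.IsHom G ψ₀ := fun u v h => (p.2.1 _ _ ((he₀ u v).mp h)).2.2
    have inj₀ : Function.Injective ψ₀ :=
      fun u v h => e₀.injective (Subtype.ext h)
    have range₀ : Set.range ψ₀ = p.1.1 := by
      ext w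
      constructor
      · rintro ⟨u, rfl⟩; exact (e₀ u).2
      · intro hw
        exact ⟨e₀.symm ⟨w, hw⟩, by simp [hψ₀]⟩
    have rel₀ : ∀ a b, (∃ u v, H.Adj u v ∧ ψ₀ u = a ∧ ψ₀ v = b) ↔ p.1.2 a b := by
      intro a b
      constructor
      · rintro ⟨u, v, h, rfl, rfl⟩
        exact (he₀ u v).mp h
      · intro h
        obtain ⟨ha, hb, -⟩ := p.2.1 a b h
        refine ⟨e₀.symm ⟨a, ha⟩, e₀.symm ⟨b, hb⟩, ?_, by simp [hψ₀], by simp [hψ₀]⟩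
        apply (he₀ _ _).mpr
        simpa using h
    apply Nat.card_congr
    refine ⟨fun q => ?_, fun e => ?_, ?_, ?_⟩
    · -- fiber element to automorphism
      obtain ⟨ψ, hq⟩ := q
      have hrange : Set.range ψ.1 = p.1.1 := congrArg (fun z => z.1.1) hq
      have hrel : ∀ a b, (∃ u v, H.Adj u v ∧ ψ.1 u = a ∧ ψ.1 v = b) ↔ p.1.2 a b := by
        intro a b
        rw [show p.1.2 = (fun a b => ∃ u v, H.Adj u v ∧ ψ.1 u = a ∧ ψ.1 v = b) from
          (congrArg (fun z => z.1.2) hq).symm]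
      set eψ : V ≃ p.1.1 := (Equiv.ofInjective ψ.1 ψ.2.2).trans (Equiv.setCongr hrange)
      refine ⟨eψ.trans e₀.symm, fun u v => ?_⟩
      have hval : ∀ u, ((eψ u : W)) = ψ.1 u := fun u => rfl
      constructor
      · intro h
        have h1 : p.1.2 (ψ.1 u) (ψ.1 v) := (hrel _ _).mp ⟨u, v, h, rfl, rfl⟩
        apply (he₀ _ _).mpr
        simpa [hval] using h1
      · intro h
        have h1 : p.1.2 (ψ.1 u) (ψ.1 v) := by
          have := (he₀ _ _).mp h
          simpa [hval] using this
        obtain ⟨u', v', h2, h3, h4⟩ := (hrel _ _).mpr h1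
        rwa [ψ.2.2 h3, ψ.2.2 h4] at h2
    · -- automorphism to fiber element
      refine ⟨⟨ψ₀ ∘ e.1, fun u v h => hom₀ ((e.2 u v).mp h), inj₀.comp e.1.injective⟩, ?_⟩
      refine Subtype.ext (Prod.ext ?_ ?_)
      · show Set.range (ψ₀ ∘ e.1) = p.1.1
        rw [Set.range_comp, Equiv.range_eq_univ, Set.image_univ, range₀]
      · show (fun a b => ∃ u v, H.Adj u v ∧ ψ₀ (e.1 u) = a ∧ ψ₀ (e.1 v) = b) = p.1.2
        funext a b
        apply propext
        rw [← rel₀ a b]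
        constructor
        · rintro ⟨u, v, h, rfl, rfl⟩
          exact ⟨e.1 u, e.1 v, (e.2 u v).mp h, rfl, rfl⟩
        · rintro ⟨u, v, h, rfl, rfl⟩
          refine ⟨e.1.symm u, e.1.symm v, ?_, by simp, by simp⟩
          have := (e.2 (e.1.symm u) (e.1.symm v)).mpr
          simp only [Equiv.apply_symm_apply] at this
          exact this h
    · -- left inverse
      rintro ⟨ψ, hq⟩
      apply Subtype.ext
      apply Subtype.ext
      funext u
      show ψ₀ (e₀.symm _) = ψ.1 u
      simp only [hψ₀, Equiv.apply_symm_apply]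
      rfl
    · -- right inverse
      intro e
      apply Subtype.ext
      apply Equiv.ext
      intro u
      apply e₀.injective
      apply Subtype.ext
      simp only [Equiv.trans_apply, Equiv.apply_symm_apply]
      rfl
  letI : Fintype {p // Pred p} := Fintype.ofFinite _
  have := Nat.card_congr e1
  rw [show injCount H G = Nat.card {ψ : V → W // H.IsHom G ψ ∧ Function.Injective ψ} from rfl,
    this, nat_card_sigma]
  rw [Finset.sum_congr rfl (fun p _ => hfib p), Finset.sum_const, Finset.card_univ, smul_eq_mul,
    hsub]
  rw [Nat.card_eq_fintype_card]
  ring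

end S6

theorem stmt6 {V : Type} [Fintype V] (H : Digraph V) :
    ∃ (n : ℕ) (S : Fin n → Setoid V) (a : Fin n → ℚ),
      (∀ i, a i ≠ 0) ∧
      (∀ i j, i ≠ j → ¬ DigraphIso (H.quot (S i)) (H.quot (S j))) ∧
      (∀ (W : Type) [Fintype W] (G : Digraph W),
        (subCount H G : ℚ) = ∑ i, a i * (homCount (H.quot (S i)) G : ℚ)) ∧
      (∀ σ : Setoid V, ∃ i, DigraphIso (H.quot σ) (H.quot (S i))) := by
  classical
  letI isoS : Setoid (Setoid V) := ⟨fun σ τ => DigraphIso (H.quot σ) (H.quot τ),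
    ⟨fun σ => S6.DigraphIso.refl _, fun h => S6.DigraphIso.symm h,
     fun h h' => S6.DigraphIso.trans h h'⟩⟩
  letI fQ : Fintype (Quotient isoS) := Fintype.ofFinite _
  set n := Fintype.card (Quotient isoS) with hn
  set enum : Fin n ≃ Quotient isoS := (Fintype.equivFin (Quotient isoS)).symm with henum
  set S : Fin n → Setoid V := fun i => (enum i).out with hS
  set c : Fin n → ℚ := fun i =>
    ∑ σ ∈ Finset.univ.filter (fun σ => Quotient.mk isoS σ = enum i), S6.nu σ with hc
  set a : Fin n → ℚ := fun i => c i / (S6.autCount H : ℚ) with ha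
  have hmemiso : ∀ (i : Fin n) (σ : Setoid V), Quotient.mk isoS σ = enum i →
      DigraphIso (H.quot σ) (H.quot (S i)) := by
    intro i σ hσ
    have h1 : Quotient.mk isoS σ = Quotient.mk isoS (S i) := by
      rw [hσ, hS]
      exact (Quotient.out_eq _).symm
    exact Quotient.exact h1
  have haut : (S6.autCount H : ℚ) ≠ 0 :=
    Nat.cast_ne_zero.mpr (S6.autCount_pos H).ne'
  have hcpos : ∀ i, 0 < (-1:ℚ)^(Nat.card V - Nat.card (Quotient (S i))) * c i := by
    intro i
    rw [hc, Finset.mul_sum]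
    apply Finset.sum_pos
    · intro σ hσ
      rw [Finset.mem_filter] at hσ
      have hcard : Nat.card (Quotient σ) = Nat.card (Quotient (S i)) :=
        S6.card_quot_congr (hmemiso i σ hσ.2)
      rw [← hcard]
      exact S6.nu_sign σ
    · refine ⟨S i, ?_⟩
      rw [Finset.mem_filter]
      refine ⟨Finset.mem_univ _, ?_⟩
      rw [hS]
      exact Quotient.out_eq _
  refine ⟨n, S, a, ?_, ?_, ?_, ?_⟩
  · intro i
    have hci : c i ≠ 0 := by
      intro h0
      have := hcpos i
      rw [h0, mul_zero] at this
      exact lt_irrefl 0 this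
    exact div_ne_zero hci haut
  · intro i j hij hiso
    apply hij
    have h1 : Quotient.mk isoS (S i) = Quotient.mk isoS (S j) := Quotient.sound hiso
    rw [hS] at h1
    rw [Quotient.out_eq, Quotient.out_eq] at h1
    exact enum.injective h1
  · intro W _ G
    have hmain : (S6.autCount H : ℚ) * (subCount H G : ℚ)
        = ∑ i, c i * (homCount (H.quot (S i)) G : ℚ) := by
      calc (S6.autCount H : ℚ) * (subCount H G : ℚ)
          = (S6.injCount H G : ℚ) := by
            rw [← Nat.cast_mul, S6.injCount_eq_aut_mul_sub H G]
        _ = ∑ σ : Setoid V, S6.nu σ * (homCount (H.quot σ) G : ℚ) :=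
            S6.inj_eq_sum_nu H G
        _ = ∑ q : Quotient isoS, ∑ σ ∈ Finset.univ.filter
              (fun σ => Quotient.mk isoS σ = q),
              S6.nu σ * (homCount (H.quot σ) G : ℚ) :=
            (Finset.sum_fiberwise _ _ _).symm
        _ = ∑ i, ∑ σ ∈ Finset.univ.filter (fun σ => Quotient.mk isoS σ = enum i),
              S6.nu σ * (homCount (H.quot σ) G : ℚ) :=
            (Equiv.sum_comp enum _).symm
        _ = ∑ i, c i * (homCount (H.quot (S i)) G : ℚ) := by
            refine Finset.sum_congr rfl fun i _ => ?_
            rw [hc, Finset.sum_mul]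
            refine Finset.sum_congr rfl fun σ hσ => ?_
            rw [Finset.mem_filter] at hσ
            rw [S6.homCount_congr (hmemiso i σ hσ.2) G]
    have hsum : ∑ i, a i * (homCount (H.quot (S i)) G : ℚ)
        = (∑ i, c i * (homCount (H.quot (S i)) G : ℚ)) / (S6.autCount H : ℚ) := by
      rw [Finset.sum_div]
      refine Finset.sum_congr rfl fun i _ => ?_
      rw [ha]
      rw [div_mul_eq_mul_div]
    rw [hsum, ← hmain, mul_comm, mul_div_assoc, div_self haut, mul_one]
  · intro σ
    refine ⟨enum.symm (Quotient.mk isoS σ), ?_⟩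
    have h1 : Quotient.mk isoS (S (enum.symm (Quotient.mk isoS σ))) = Quotient.mk isoS σ := by
      rw [hS]
      rw [Quotient.out_eq, Equiv.apply_symm_apply]
    exact S6.DigraphIso.symm (Quotient.exact h1)

end
end
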